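/- arXiv:1301.0516 — 2 statements merged into one kernel-verified Lean document; each statement's English description precedes it below -/
import Mathlib

section
/- If A = kQ/I is a triangular string algebra whose relations are all quadratic (e.g., a gentle triangular algebra), then ⁺⁻(0,1)_n is empty for n ≥ 2, and hence dim_k HH^n(A) = |⁻(0,0)⁻_n| for all n ≥ 2. -/
/-!
Common framework for formalizing "Hochschild cohomology of triangular string
algebras and its ring structure" (Redondo–Román).

* Interval combinatorics model of Bardzell's `n`-concatenations along a directed
  path (a directed path is modelled by the line `ℕ`, a subpath by an interval,
  and a relation by the interval it occupies).
* A combinatorial model of a bound quiver `(Q, I)` with `I` a monomial ideal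
  generated by a reduced set `R` of paths: paths are nonempty composable lists
  of arrows, `AP_n` is the set of supports of `n`-concatenations, `𝒫` is the
  basis of `A = kQ/I` given by the paths not in `I`.
* The Hochschild complex `Hom_{E-E}(kAP_n, A) ≅ k(AP_n ∥ 𝒫)` of a (triangular)
  monomial algebra obtained from Bardzell's minimal resolution, with its
  differentials `F_n` realized as explicit matrices, and the Hochschild
  cohomology `HH^n(A)` defined as the cohomology of this complex (for monomial
  algebras this complex computes Hochschild cohomology, by Bardzell's theorem).
-/

attribute [local instance] Classical.propDecidable

noncomputable section

namespace Paper

/-! ### Interval model of concatenations along a directed path -/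

/-- An interval `(s, t)` on the line `ℕ`: the model of a subpath of a fixed
directed path `T`, going from vertex `s` to vertex `t`. -/
abbrev Iv := ℕ × ℕ

/-- `R` is a reduced set of relations along a directed path: every relation is a
path of length at least two, and no relation divides another one. -/
structure RelSet (R : Set Iv) : Prop where
  len : ∀ r ∈ R, r.1 + 2 ≤ r.2
  nodiv : ∀ r ∈ R, ∀ r' ∈ R, r.1 ≤ r'.1 → r'.2 ≤ r.2 → r = r'

/-- The window from which the `(i+1)`-st relation (0-based index `i ≥ 1`) of a
concatenation is chosen: `L_1 = {p ∈ R : s(p_1) < s(p) < t(p_1)}` and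
`L_{j+1} = {p ∈ R : t(p_{j-1}) ≤ s(p) < t(p_j)}`. -/
def cWindow (R : Set Iv) (p : ℕ → Iv) (i : ℕ) : Set Iv :=
  if i = 1 then {q | q ∈ R ∧ (p 0).1 < q.1 ∧ q.1 < (p 0).2}
  else {q | q ∈ R ∧ (p (i - 2)).2 ≤ q.1 ∧ q.1 < (p (i - 1)).2}

/-- `IsConcat R k p` : the relations `p 0, p 1, …, p (k-1)` form a
`(k+1)`-concatenation `(p_1, …, p_k)` in Bardzell's sense: each `p i` (for
`1 ≤ i < k`) is a relation of the corresponding window with minimal source. -/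
def IsConcat (R : Set Iv) (k : ℕ) (p : ℕ → Iv) : Prop :=
  p 0 ∈ R ∧ ∀ i, 1 ≤ i → i < k →
    (p i ∈ cWindow R p i ∧ ∀ q ∈ cWindow R p i, (p i).1 ≤ q.1)

/-- The dual window: `L_1^{op} = {q ∈ R : s(q_1) < t(q) < t(q_1)}` and
`L_{j+1}^{op} = {q ∈ R : s(q_j) < t(q) ≤ s(q_{j-1})}`. -/
def oWindow (R : Set Iv) (q : ℕ → Iv) (i : ℕ) : Set Iv :=
  if i = 1 then {r | r ∈ R ∧ (q 0).1 < r.2 ∧ r.2 < (q 0).2}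
  else {r | r ∈ R ∧ (q (i - 1)).1 < r.2 ∧ r.2 ≤ (q (i - 2)).1}

/-- `IsOpConcat R k q` : the relations `q 0, …, q (k-1)` form a
`(k+1)`-op-concatenation `(q_{k}, …, q_1)` (so `q 0 = q_k` is built first and
`q^j = q (k - j)` in the paper's upper-index notation): each `q i` (for
`1 ≤ i < k`) is a relation of the corresponding dual window with maximal
target. -/
def IsOpConcat (R : Set Iv) (k : ℕ) (q : ℕ → Iv) : Prop :=
  q 0 ∈ R ∧ ∀ i, 1 ≤ i → i < k →
    (q i ∈ oWindow R q i ∧ ∀ r ∈ oWindow R q i, r.2 ≤ (q i).2)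

/-- `IsSupport R n w` : the interval `w` is the support of an
`n`-concatenation (for `n = 0` a vertex, for `n = 1` an arrow). -/
def IsSupport (R : Set Iv) : ℕ → Iv → Prop
  | 0, w => w.2 = w.1
  | 1, w => w.2 = w.1 + 1
  | (n + 2), w => ∃ p : ℕ → Iv, IsConcat R (n + 1) p ∧ (p 0).1 = w.1 ∧ (p n).2 = w.2

/-- `IsOpSupport R n w` : the interval `w` is the support of an
`n`-op-concatenation. -/
def IsOpSupport (R : Set Iv) : ℕ → Iv → Prop
  | 0, w => w.2 = w.1
  | 1, w => w.2 = w.1 + 1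
  | (n + 2), w => ∃ q : ℕ → Iv, IsOpConcat R (n + 1) q ∧ (q n).1 = w.1 ∧ (q 0).2 = w.2

/-! ### The combinatorial model of a monomial (string) bound quiver -/

/-- A finite quiver, given by raw data. -/
structure QuivData where
  V : Type
  E : Type
  src : E → V
  tgt : E → V

variable (Q : QuivData)

/-- A (nontrivial) path in `Q`: a nonempty composable list of arrows. -/
def IsPathL (l : List Q.E) : Prop :=
  l ≠ [] ∧ l.Chain' fun a b => Q.tgt a = Q.src b

/-- The source vertex of a nonempty list of arrows (as an `Option`). -/
def psrc (l : List Q.E) : Option Q.V := l.head?.map Q.src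

/-- The target vertex of a nonempty list of arrows (as an `Option`). -/
def ptgt (l : List Q.E) : Option Q.V := l.getLast?.map Q.tgt

/-- `l` lies in the (monomial) ideal `I = ⟨R⟩`: some relation divides `l`. -/
def inI (R : Set (List Q.E)) (l : List Q.E) : Prop := ∃ r ∈ R, r <:+: l

/-- `l` belongs to the canonical basis `𝒫` of `A = kQ/I`: a nontrivial path
not in `I`.  (Trivial paths `e_x` are treated separately.) -/
def isP (R : Set (List Q.E)) (l : List Q.E) : Prop := IsPathL Q l ∧ ¬ inI Q R l

/-- `(Q, R)` presents a **triangular string algebra**: relations are paths of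
length `≥ 2`, form a reduced (minimal) generating set, the string conditions
S1), S2) hold, and `Q` has no oriented cycles. -/
structure StringData (R : Set (List Q.E)) : Prop where
  relPath : ∀ r ∈ R, IsPathL Q r ∧ 2 ≤ r.length
  relMin : ∀ r ∈ R, ∀ r' ∈ R, r' <:+: r → r' = r
  srcTwo : ∀ v : Q.V, ∀ a b c : Q.E, Q.src a = v → Q.src b = v → Q.src c = v →
    a = b ∨ a = c ∨ b = c
  tgtTwo : ∀ v : Q.V, ∀ a b c : Q.E, Q.tgt a = v → Q.tgt b = v → Q.tgt c = v →
    a = b ∨ a = c ∨ b = c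
  uniqRight : ∀ a b c : Q.E, Q.tgt a = Q.src b → Q.tgt a = Q.src c →
    [a, b] ∉ R → [a, c] ∉ R → b = c
  uniqLeft : ∀ a b c : Q.E, Q.tgt b = Q.src a → Q.tgt c = Q.src a →
    [b, a] ∉ R → [c, a] ∉ R → b = c
  triangular : ∀ l : List Q.E, IsPathL Q l → psrc Q l ≠ ptgt Q l

/-- The subpath of `l` occupying the positions `[c.1, c.2)`. -/
def slice (l : List Q.E) (c : Iv) : List Q.E := (l.drop c.1).take (c.2 - c.1)

/-- The intervals of positions of `w` occupied by relations of `R`. -/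
def relIvs (R : Set (List Q.E)) (w : List Q.E) : Set Iv :=
  {c | c.1 < c.2 ∧ c.2 ≤ w.length ∧ slice Q w c ∈ R}

/-- `w ∈ AP_n` : `w` is the support of an `n`-concatenation of relations of
`R` (for `n = 1`, an arrow; the vertices `AP_0` are treated separately). -/
def IsAP (R : Set (List Q.E)) : ℕ → List Q.E → Prop
  | 0, _ => False
  | 1, w => IsPathL Q w ∧ w.length = 1
  | (n + 2), w => IsPathL Q w ∧ IsSupport (relIvs Q R w) (n + 2) (0, w.length)

/-- `w ∈ AP_n^{op}` : `w` is the support of an `n`-op-concatenation. -/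
def IsAPop (R : Set (List Q.E)) : ℕ → List Q.E → Prop
  | 0, _ => False
  | 1, w => IsPathL Q w ∧ w.length = 1
  | (n + 2), w => IsPathL Q w ∧ IsOpSupport (relIvs Q R w) (n + 2) (0, w.length)

/-- A pair of parallel paths. -/
abbrev Pr := List Q.E × List Q.E

/-- The set `(AP_n ∥ 𝒫)` of pairs `(ρ, γ)` with `ρ ∈ AP_n`, `γ ∈ 𝒫` and
`ρ, γ` parallel; it indexes a basis of `Hom_{E-E}(kAP_n, A)`. -/
def PairSet (R : Set (List Q.E)) (n : ℕ) : Set (Pr Q) :=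
  {x | IsAP Q R n x.1 ∧ isP Q R x.2 ∧ psrc Q x.1 = psrc Q x.2 ∧ ptgt Q x.1 = ptgt Q x.2}

/-- `ρ` and `γ` have the same first arrow. -/
def sharesFirst (x : Pr Q) : Prop := x.1.head? = x.2.head?

/-- `ρ` and `γ` have the same last arrow. -/
def sharesLast (x : Pr Q) : Prop := x.1.getLast? = x.2.getLast?

/-- The class `(0,0)_n`. -/
def cls00 (R : Set (List Q.E)) (n : ℕ) : Set (Pr Q) :=
  {x ∈ PairSet Q R n | ¬ sharesFirst Q x ∧ ¬ sharesLast Q x}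

/-- The class `(1,0)_n`. -/
def cls10 (R : Set (List Q.E)) (n : ℕ) : Set (Pr Q) :=
  {x ∈ PairSet Q R n | sharesFirst Q x ∧ ¬ sharesLast Q x}

/-- The class `(0,1)_n`. -/
def cls01 (R : Set (List Q.E)) (n : ℕ) : Set (Pr Q) :=
  {x ∈ PairSet Q R n | ¬ sharesFirst Q x ∧ sharesLast Q x}

/-- The class `(1,1)_n`. -/
def cls11 (R : Set (List Q.E)) (n : ℕ) : Set (Pr Q) :=
  {x ∈ PairSet Q R n | sharesFirst Q x ∧ sharesLast Q x}

/-- `Q_1 · γ ⊆ I` (left decoration `⁻`). -/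
def leftI (R : Set (List Q.E)) (γ : List Q.E) : Prop :=
  ∀ b : Q.E, some (Q.tgt b) = psrc Q γ → inI Q R (b :: γ)

/-- `γ · Q_1 ⊆ I` (right decoration `⁻`). -/
def rightI (R : Set (List Q.E)) (γ : List Q.E) : Prop :=
  ∀ b : Q.E, some (Q.src b) = ptgt Q γ → inI Q R (γ ++ [b])

/-- `Q_1 · γ̂ ⊆ I` where `γ = γ̂ α₂`, i.e. `γ̂ = γ.dropLast`. -/
def leftIHat (R : Set (List Q.E)) (γ : List Q.E) : Prop :=
  ∀ b : Q.E, some (Q.tgt b) = psrc Q γ → inI Q R (b :: γ.dropLast)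

/-- `γ̂ · Q_1 ⊆ I` where `γ = α₁ γ̂`, i.e. `γ̂ = γ.tail`. -/
def rightIHat (R : Set (List Q.E)) (γ : List Q.E) : Prop :=
  ∀ b : Q.E, some (Q.src b) = ptgt Q γ → inI Q R (γ.tail ++ [b])

/-- `⁻(0,0)⁻_n`. -/
def mm00 (R : Set (List Q.E)) (n : ℕ) : Set (Pr Q) :=
  {x ∈ cls00 Q R n | leftI Q R x.2 ∧ rightI Q R x.2}

/-- `⁻(0,1)_n`. -/
def m01 (R : Set (List Q.E)) (n : ℕ) : Set (Pr Q) :=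
  {x ∈ cls01 Q R n | leftI Q R x.2}

/-- `⁺⁻(0,1)_n`. -/
def pm01 (R : Set (List Q.E)) (n : ℕ) : Set (Pr Q) :=
  {x ∈ cls01 Q R n | leftI Q R x.2 ∧ ¬ leftIHat Q R x.2}

/-- `⁻⁻(0,1)_n`. -/
def mm01 (R : Set (List Q.E)) (n : ℕ) : Set (Pr Q) :=
  {x ∈ cls01 Q R n | leftI Q R x.2 ∧ leftIHat Q R x.2}

/-- `(1,0)_n⁻`. -/
def m10 (R : Set (List Q.E)) (n : ℕ) : Set (Pr Q) :=
  {x ∈ cls10 Q R n | rightI Q R x.2}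

/-! ### The Hochschild complex obtained from Bardzell's resolution -/

variable (k : Type) [Field k]

/-- The `(y, x)` matrix entry of the differential `F_n` of the Hochschild
complex: for `x = (w, γ) ∈ (AP_n ∥ 𝒫)` and `y = (ψ, γ') ∈ (AP_{n-1} ∥ 𝒫)`, the
signed number of ways of dividing `w = L(ψ) ψ R(ψ)` (with `L, R` not both
trivial) so that `γ = L(ψ) γ' R(ψ)`; the sign is `(-1)^n` for the division
with trivial `L(ψ)` (this reproduces `F_{2m}` and `F_{2m+1}` of the paper). -/
def coeffF (R : Set (List Q.E)) (n : ℕ) (y x : Pr Q) : k :=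
  ∑ᶠ c : Iv,
    if c.1 < c.2 ∧ c.2 ≤ x.1.length ∧ ¬(c.1 = 0 ∧ c.2 = x.1.length) ∧
        y.1 = slice Q x.1 c ∧ x.2 = x.1.take c.1 ++ y.2 ++ x.1.drop c.2 then
      (if c.1 = 0 then (-1 : k) ^ n else 1)
    else 0

/-- The differential `F_n : Hom_{E-E}(kAP_{n-1}, A) → Hom_{E-E}(kAP_n, A)`
(`n ≥ 2`), in the bases `(AP_{n-1} ∥ 𝒫)`, `(AP_n ∥ 𝒫)`. -/
def F (R : Set (List Q.E)) (n : ℕ) [Fintype ↥(PairSet Q R (n - 1))] :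
    (↥(PairSet Q R (n - 1)) → k) →ₗ[k] (↥(PairSet Q R n) → k) :=
  Matrix.mulVecLin (Matrix.of fun x y => coeffF Q k R n y.val x.val)

/-- The differential `F_1 : Hom_{E-E}(kAP_0, A) → Hom_{E-E}(kAP_1, A)`; for a
triangular algebra `Hom_{E-E}(kAP_0, A) ≅ kQ_0`. -/
def F1 (R : Set (List Q.E)) [Fintype Q.V] [Fintype ↥(PairSet Q R 1)] :
    (Q.V → k) →ₗ[k] (↥(PairSet Q R 1) → k) :=
  Matrix.mulVecLin (Matrix.of fun x v =>
    if x.val.2 = x.val.1 then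
      (if ptgt Q x.val.1 = some v then (1 : k) else 0) -
        (if psrc Q x.val.1 = some v then (1 : k) else 0)
    else 0)

/-- `HH^0(A) = Ker F_1`. -/
abbrev HH0 (R : Set (List Q.E)) [Fintype Q.V] [Fintype ↥(PairSet Q R 1)] :=
  ↥(LinearMap.ker (F1 Q k R))

/-- `HH^1(A) = Ker F_2 / Im F_1`. -/
abbrev HH1 (R : Set (List Q.E)) [Fintype Q.V] [∀ j, Fintype ↥(PairSet Q R j)] :=
  ↥(LinearMap.ker (F Q k R 2)) ⧸
    Submodule.comap (LinearMap.ker (F Q k R 2)).subtype (LinearMap.range (F1 Q k R))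

/-- `HH^n(A) = Ker F_{n+1} / Im F_n` for `n ≥ 2`. -/
abbrev HHn (R : Set (List Q.E)) (n : ℕ) [∀ j, Fintype ↥(PairSet Q R j)] :=
  ↥(LinearMap.ker (F Q k R (n + 1))) ⧸
    Submodule.comap (LinearMap.ker (F Q k R (n + 1))).subtype (LinearMap.range (F Q k R n))

/-- The underlying graph of `Q` is connected. -/
def connectedQ : Prop :=
  (SimpleGraph.fromRel fun u v => ∃ a : Q.E, Q.src a = u ∧ Q.tgt a = v).Connected

/-- The underlying graph of the finite quiver `Q` is a tree (connected with
`|Q_1| = |Q_0| - 1`). -/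
def IsTreeQuiv [Fintype Q.V] [Fintype Q.E] : Prop :=
  connectedQ Q ∧ Fintype.card Q.E + 1 = Fintype.card Q.V

/-- A monomial algebra is simply connected iff its quiver is a tree; we use
this characterization as the definition of simple connectedness. -/
def SimplyConnected [Fintype Q.V] [Fintype Q.E] : Prop := IsTreeQuiv Q



/-! ### Auxiliary development for statement11 -/

section ListAux
variable {α : Type*}

lemma pair_infix_cons' {x y a : α} {l : List α} (h : [x, y] <:+: a :: l) :
    [x, y] <:+: l ∨ (x = a ∧ l.head? = some y) := by
  obtain ⟨s, t, hst⟩ := h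
  cases s with
  | nil =>
    right
    rw [List.nil_append, List.cons_append, List.cons_append, List.nil_append] at hst
    injection hst with h1 h2
    exact ⟨h1, by rw [← h2]; rfl⟩
  | cons a' s' =>
    left
    rw [List.cons_append] at hst
    injection hst with h1 h2
    exact ⟨s', t, h2⟩

lemma pair_infix_concat' {x y c : α} {l : List α} (h : [x, y] <:+: l ++ [c]) :
    [x, y] <:+: l ∨ (y = c ∧ l.getLast? = some x) := by
  obtain ⟨s, t, hst⟩ := h
  rcases List.eq_nil_or_concat t with rfl | ⟨t', c', rfl⟩
  · right
    rw [List.append_nil] at hst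
    have h' : (s ++ [x]) ++ [y] = l ++ [c] := by
      rw [← hst]; simp
    obtain ⟨h3, h4⟩ := List.append_inj' h' rfl
    injection h4 with h5
    refine ⟨h5, ?_⟩
    rw [← h3, List.getLast?_concat]
  · left
    have h' : (s ++ [x, y] ++ t') ++ [c'] = l ++ [c] := by
      rw [← hst]; simp
    obtain ⟨h3, h4⟩ := List.append_inj' h' rfl
    exact ⟨s, t', h3⟩

lemma pair_infix_of_infix_left {x y c : α} {l : List α} (h : [x, y] <:+: l) :
    [x, y] <:+: l ++ [c] :=
  h.trans (List.prefix_append l [c]).isInfix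

lemma pair_infix_of_infix_cons {x y a : α} {l : List α} (h : [x, y] <:+: l) :
    [x, y] <:+: a :: l :=
  h.trans (List.suffix_cons a l).isInfix

lemma getLast?_eq_some_iff' {x : α} {l : List α} :
    l.getLast? = some x ↔ ∃ l', l = l' ++ [x] := by
  constructor
  · intro h
    rcases List.eq_nil_or_concat l with rfl | ⟨l', c, rfl⟩
    · simp at h
    · rw [List.concat_eq_append] at h ⊢
      rw [List.getLast?_concat] at h
      injection h with h
      exact ⟨l', by rw [h]⟩
  · rintro ⟨l', rfl⟩
    exact List.getLast?_concat

lemma head?_eq_some_iff' {x : α} {l : List α} :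
    l.head? = some x ↔ ∃ l', l = x :: l' := by
  cases l with
  | nil => simp
  | cons a l => simp [eq_comm]

lemma pair_infix_concat_self {x c : α} {l : List α} (h : l.getLast? = some x) :
    [x, c] <:+: l ++ [c] := by
  obtain ⟨l', rfl⟩ := getLast?_eq_some_iff'.1 h
  exact ⟨l', [], by simp⟩

lemma pair_infix_cons_self {a y : α} {l : List α} (h : l.head? = some y) :
    [a, y] <:+: a :: l := by
  obtain ⟨l', rfl⟩ := head?_eq_some_iff'.1 h
  exact ⟨[], l', by simp⟩

end ListAux

section Dev
variable {Q : QuivData} {R : Set (List Q.E)}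

/-- every length-two infix is a relation -/
def P2 (Q : QuivData) (R : Set (List Q.E)) (w : List Q.E) : Prop :=
  ∀ a b : Q.E, [a, b] <:+: w → [a, b] ∈ R

/-- no length-two infix is a relation -/
def Pf (Q : QuivData) (R : Set (List Q.E)) (w : List Q.E) : Prop :=
  ∀ a b : Q.E, [a, b] <:+: w → [a, b] ∉ R

lemma psrc_cons (a : Q.E) (l : List Q.E) : psrc Q (a :: l) = some (Q.src a) := rfl

lemma psrc_eq_some {l : List Q.E} {y : Q.E} (h : l.head? = some y) :
    psrc Q l = some (Q.src y) := by unfold psrc; rw [h]; rfl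

lemma ptgt_eq_some {l : List Q.E} {x : Q.E} (h : l.getLast? = some x) :
    ptgt Q l = some (Q.tgt x) := by unfold ptgt; rw [h]; rfl

lemma psrc_concat {l : List Q.E} (hl : l ≠ []) (b : Q.E) :
    psrc Q (l ++ [b]) = psrc Q l := by
  cases l with
  | nil => exact absurd rfl hl
  | cons a l => rfl

lemma ptgt_concat (l : List Q.E) (b : Q.E) : ptgt Q (l ++ [b]) = some (Q.tgt b) :=
  ptgt_eq_some (List.getLast?_concat)

lemma ptgt_cons {l : List Q.E} (hl : l ≠ []) (a : Q.E) :
    ptgt Q (a :: l) = ptgt Q l := by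
  obtain ⟨l', x, rfl⟩ := List.eq_nil_or_concat l |>.resolve_left hl
  rw [List.concat_eq_append, ← List.cons_append]
  rw [ptgt_concat, ptgt_concat]

lemma path_concat_iff {l : List Q.E} {x b : Q.E} (hx : l.getLast? = some x) :
    IsPathL Q (l ++ [b]) ↔ IsPathL Q l ∧ Q.tgt x = Q.src b := by
  have hl : l ≠ [] := by rintro rfl; simp at hx
  unfold IsPathL
  simp only [List.Chain', List.isChain_append]
  simp [hx, hl]

lemma path_cons_iff {l : List Q.E} {y a : Q.E} (hy : l.head? = some y) :
    IsPathL Q (a :: l) ↔ IsPathL Q l ∧ Q.tgt a = Q.src y := by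
  have hl : l ≠ [] := by rintro rfl; simp at hy
  unfold IsPathL
  simp only [List.Chain', List.isChain_cons]
  simp [hy, hl]
  tauto

lemma rel_pair (hquad : ∀ r ∈ R, r.length = 2) {r : List Q.E} (hr : r ∈ R) :
    ∃ a b, r = [a, b] := List.length_eq_two.1 (hquad r hr)

lemma inI_iff (hquad : ∀ r ∈ R, r.length = 2) {l : List Q.E} :
    inI Q R l ↔ ∃ a b : Q.E, [a, b] ∈ R ∧ [a, b] <:+: l := by
  constructor
  · rintro ⟨r, hr, hinf⟩
    obtain ⟨a, b, rfl⟩ := rel_pair hquad hr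
    exact ⟨a, b, hr, hinf⟩
  · rintro ⟨a, b, h1, h2⟩
    exact ⟨[a, b], h1, h2⟩

lemma not_inI_iff (hquad : ∀ r ∈ R, r.length = 2) {l : List Q.E} :
    ¬ inI Q R l ↔ Pf Q R l := by
  rw [inI_iff hquad]; unfold Pf; push_neg
  constructor <;> intro h a b h1 h2 <;> exact h a b h2 h1

lemma isP_iff (hquad : ∀ r ∈ R, r.length = 2) {γ : List Q.E} :
    isP Q R γ ↔ IsPathL Q γ ∧ Pf Q R γ := by
  unfold isP
  rw [not_inI_iff hquad]

lemma inI_cons_iff (hquad : ∀ r ∈ R, r.length = 2) {γ : List Q.E} {a y : Q.E}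
    (hy : γ.head? = some y) (hγ : Pf Q R γ) :
    inI Q R (a :: γ) ↔ [a, y] ∈ R := by
  rw [inI_iff hquad]
  constructor
  · rintro ⟨u, v, huv, hinf⟩
    rcases pair_infix_cons' hinf with h | ⟨rfl, h2⟩
    · exact absurd huv (hγ _ _ h)
    · rw [hy] at h2; injection h2 with h2; rw [h2]; exact huv
  · intro h
    exact ⟨a, y, h, pair_infix_cons_self hy⟩

lemma inI_concat_iff (hquad : ∀ r ∈ R, r.length = 2) {γ : List Q.E} {x b : Q.E}
    (hx : γ.getLast? = some x) (hγ : Pf Q R γ) :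
    inI Q R (γ ++ [b]) ↔ [x, b] ∈ R := by
  rw [inI_iff hquad]
  constructor
  · rintro ⟨u, v, huv, hinf⟩
    rcases pair_infix_concat' hinf with h | ⟨rfl, h2⟩
    · exact absurd huv (hγ _ _ h)
    · rw [hx] at h2; injection h2 with h2; rw [h2]; exact huv
  · intro h
    exact ⟨x, b, h, pair_infix_concat_self hx⟩

lemma leftI_iff (hquad : ∀ r ∈ R, r.length = 2) {γ : List Q.E} {y : Q.E}
    (hy : γ.head? = some y) (hγ : Pf Q R γ) :
    leftI Q R γ ↔ ∀ a : Q.E, Q.tgt a = Q.src y → [a, y] ∈ R := by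
  unfold leftI
  rw [psrc_eq_some hy]
  constructor
  · intro h a ha
    exact (inI_cons_iff hquad hy hγ).1 (h a (by rw [ha]))
  · intro h a ha
    injection ha with ha
    exact (inI_cons_iff hquad hy hγ).2 (h a ha)

lemma rightI_iff (hquad : ∀ r ∈ R, r.length = 2) {γ : List Q.E} {x : Q.E}
    (hx : γ.getLast? = some x) (hγ : Pf Q R γ) :
    rightI Q R γ ↔ ∀ b : Q.E, Q.src b = Q.tgt x → [x, b] ∈ R := by
  unfold rightI
  rw [ptgt_eq_some hx]
  constructor
  · intro h b hb
    exact (inI_concat_iff hquad hx hγ).1 (h b (by rw [hb]))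
  · intro h b hb
    injection hb with hb
    exact (inI_concat_iff hquad hx hγ).2 (h b hb)

end Dev

section APchar
variable {Q : QuivData} {R : Set (List Q.E)}

lemma relIvs_mem (hquad : ∀ r ∈ R, r.length = 2) {w : List Q.E} {c : Iv} :
    c ∈ relIvs Q R w ↔ c.2 = c.1 + 2 ∧ c.2 ≤ w.length ∧ slice Q w c ∈ R := by
  unfold relIvs
  rw [Set.mem_setOf_eq]
  constructor
  · rintro ⟨h1, h2, h3⟩
    have hlen := hquad _ h3
    unfold slice at hlen
    rw [List.length_take, List.length_drop] at hlen
    exact ⟨by omega, h2, h3⟩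
  · rintro ⟨h1, h2, h3⟩
    exact ⟨by omega, h2, h3⟩

lemma slice_eq_pair {w : List Q.E} {i : ℕ} (h : i + 2 ≤ w.length) :
    ∃ a b, slice Q w (i, i + 2) = [a, b] ∧ [a, b] <:+: w := by
  have hlen : (slice Q w (i, i + 2)).length = 2 := by
    unfold slice
    rw [List.length_take, List.length_drop]
    simp only
    omega
  obtain ⟨a, b, hab⟩ := List.length_eq_two.1 hlen
  refine ⟨a, b, hab, ?_⟩
  rw [← hab]
  unfold slice
  exact (List.take_prefix _ _).isInfix.trans (List.drop_suffix _ _).isInfix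

lemma infix_slice {w : List Q.E} {a b : Q.E} (h : [a, b] <:+: w) :
    ∃ i, i + 2 ≤ w.length ∧ slice Q w (i, i + 2) = [a, b] := by
  obtain ⟨s, t, rfl⟩ := h
  refine ⟨s.length, by simp, ?_⟩
  unfold slice
  simp only
  rw [show s.length + 2 - s.length = 2 by omega]
  rw [List.append_assoc, List.drop_left]
  rfl

lemma concat_forces (hquad : ∀ r ∈ R, r.length = 2) {w : List Q.E} {n : ℕ} {p : ℕ → Iv}
    (hc : IsConcat (relIvs Q R w) (n + 1) p) (h0 : (p 0).1 = 0) :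
    ∀ i, i ≤ n → p i = (i, i + 2) := by
  obtain ⟨hp0, hstep⟩ := hc
  intro i
  induction i using Nat.strong_induction_on with
  | _ i ih =>
    intro hin
    match i with
    | 0 =>
      have h2 := ((relIvs_mem hquad).1 hp0).1
      rw [Prod.ext_iff]
      exact ⟨h0, by rw [h2, h0]⟩
    | 1 =>
      have hw := (hstep 1 le_rfl (by omega)).1
      unfold cWindow at hw
      rw [if_pos rfl, Set.mem_setOf_eq] at hw
      obtain ⟨hmem, hlt1, hlt2⟩ := hw
      have hp0' : p 0 = (0, 2) := ih 0 (by omega) (by omega)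
      rw [hp0'] at hlt1 hlt2
      have h2 := ((relIvs_mem hquad).1 hmem).1
      have : (p 1).1 = 1 := by omega
      rw [Prod.ext_iff]
      exact ⟨this, by rw [h2, this]⟩
    | (j + 2) =>
      have hw := (hstep (j + 2) (by omega) (by omega)).1
      unfold cWindow at hw
      rw [if_neg (by omega), Set.mem_setOf_eq] at hw
      obtain ⟨hmem, hge, hlt⟩ := hw
      have e1 : p (j + 2 - 2) = (j, j + 2) := by
        rw [show j + 2 - 2 = j by omega]; exact ih j (by omega) (by omega)
      have e2 : p (j + 2 - 1) = (j + 1, j + 3) := by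
        rw [show j + 2 - 1 = j + 1 by omega]; exact ih (j + 1) (by omega) (by omega)
      rw [e1] at hge
      rw [e2] at hlt
      have h2 := ((relIvs_mem hquad).1 hmem).1
      have : (p (j + 2)).1 = j + 2 := by omega
      rw [Prod.ext_iff]
      exact ⟨this, by rw [h2, this]⟩

lemma isAP_iff (hquad : ∀ r ∈ R, r.length = 2) {m : ℕ} (hm : 1 ≤ m) {w : List Q.E} :
    IsAP Q R m w ↔ IsPathL Q w ∧ w.length = m ∧ P2 Q R w := by
  match m, hm with
  | 1, _ =>
    show IsPathL Q w ∧ w.length = 1 ↔ _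
    constructor
    · rintro ⟨h1, h2⟩
      refine ⟨h1, h2, ?_⟩
      intro a b hinf
      have := hinf.length_le
      rw [h2] at this
      simp at this
    · rintro ⟨h1, h2, _⟩; exact ⟨h1, h2⟩
  | (n + 2), _ =>
    constructor
    · rintro ⟨hp, p, hc, h0, hn⟩
      have hforce := concat_forces hquad hc h0
      have hlen : w.length = n + 2 := by
        have := hforce n le_rfl
        rw [this] at hn
        omega
      refine ⟨hp, hlen, ?_⟩
      intro a b hinf
      obtain ⟨i, hi, hsl⟩ := infix_slice hinf
      have hiw : p i ∈ relIvs Q R w := by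
        match i, hforce i (by omega) with
        | 0, _ => exact hc.1
        | (j + 1), _ =>
          have hw := (hc.2 (j + 1) (by omega) (by omega)).1
          unfold cWindow at hw
          split at hw <;> exact hw.1
      rw [hforce i (by omega)] at hiw
      have := ((relIvs_mem hquad).1 hiw).2.2
      rw [hsl] at this
      exact this
    · rintro ⟨hp, hlen, hP2⟩
      have hrel : ∀ i, i + 2 ≤ w.length → (i, i + 2) ∈ relIvs Q R w := by
        intro i hi
        rw [relIvs_mem hquad]
        refine ⟨rfl, hi, ?_⟩
        obtain ⟨a, b, he, hinf⟩ := slice_eq_pair (w := w) (i := i) hi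
        rw [he]; exact hP2 a b hinf
      refine ⟨hp, fun i => (i, i + 2), ⟨hrel 0 (by omega), ?_⟩, rfl, ?_⟩
      · intro i h1 h2
        have hmem : (i, i + 2) ∈ relIvs Q R w := hrel i (by omega)
        constructor
        · unfold cWindow
          split
          · next hh =>
            rw [Set.mem_setOf_eq]
            subst hh
            exact ⟨hmem, Nat.zero_lt_one, Nat.one_lt_two⟩
          · next hh =>
            rw [Set.mem_setOf_eq]
            refine ⟨hmem, ?_, ?_⟩
            · show i - 2 + 2 ≤ i; omega
            · show i < i - 1 + 2; omega
        · intro q hq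
          unfold cWindow at hq
          split at hq
          · next hh =>
            rw [Set.mem_setOf_eq] at hq
            subst hh
            have h3 : (0 : ℕ) < q.1 := hq.2.1
            show 1 ≤ q.1; omega
          · next hh =>
            rw [Set.mem_setOf_eq] at hq
            have h3 : i - 2 + 2 ≤ q.1 := hq.2.1
            show i ≤ q.1; omega
      · show n + 2 = w.length; omega

/-- concrete characterization of a member of `(AP_m ∥ 𝒫)` -/
def Bm (Q : QuivData) (R : Set (List Q.E)) (m : ℕ) (x : Pr Q) : Prop :=
  IsPathL Q x.1 ∧ x.1.length = m ∧ P2 Q R x.1 ∧ IsPathL Q x.2 ∧ Pf Q R x.2 ∧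
    psrc Q x.1 = psrc Q x.2 ∧ ptgt Q x.1 = ptgt Q x.2

lemma pairSet_iff (hquad : ∀ r ∈ R, r.length = 2) {m : ℕ} (hm : 1 ≤ m) {x : Pr Q} :
    x ∈ PairSet Q R m ↔ Bm Q R m x := by
  unfold PairSet Bm
  rw [Set.mem_setOf_eq, isAP_iff hquad hm, isP_iff hquad]
  tauto

end APchar

section Ext
variable {Q : QuivData} {R : Set (List Q.E)}

lemma exists_getLast {α : Type*} {l : List α} (h : l ≠ []) : ∃ x, l.getLast? = some x := by
  obtain ⟨l', c, rfl⟩ := (List.eq_nil_or_concat l).resolve_left h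
  rw [List.concat_eq_append]
  exact ⟨c, List.getLast?_concat⟩

lemma exists_head {α : Type*} {l : List α} (h : l ≠ []) : ∃ x, l.head? = some x := by
  cases l with
  | nil => exact absurd rfl h
  | cons a l => exact ⟨a, rfl⟩

lemma head?_concat {α : Type*} {l : List α} (h : l ≠ []) (b : α) :
    (l ++ [b]).head? = l.head? := by
  cases l with
  | nil => exact absurd rfl h
  | cons a l => rfl

lemma getLast?_cons_ne {α : Type*} {l : List α} (h : l ≠ []) (a : α) :
    (a :: l).getLast? = l.getLast? := by
  obtain ⟨l', c, rfl⟩ := (List.eq_nil_or_concat l).resolve_left h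
  rw [List.concat_eq_append, ← List.cons_append, List.getLast?_concat, List.getLast?_concat]

lemma P2_concat_iff {w : List Q.E} {α b : Q.E} (hα : w.getLast? = some α) :
    P2 Q R (w ++ [b]) ↔ P2 Q R w ∧ [α, b] ∈ R := by
  constructor
  · intro h
    exact ⟨fun u v hi => h u v (pair_infix_of_infix_left hi),
      h α b (pair_infix_concat_self hα)⟩
  · rintro ⟨h1, h2⟩ u v hi
    rcases pair_infix_concat' hi with hi' | ⟨rfl, hl⟩
    · exact h1 _ _ hi'
    · rw [hα] at hl; injection hl with hl; rw [← hl]; exact h2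

lemma Pf_concat_iff {w : List Q.E} {α b : Q.E} (hα : w.getLast? = some α) :
    Pf Q R (w ++ [b]) ↔ Pf Q R w ∧ [α, b] ∉ R := by
  constructor
  · intro h
    exact ⟨fun u v hi => h u v (pair_infix_of_infix_left hi),
      h α b (pair_infix_concat_self hα)⟩
  · rintro ⟨h1, h2⟩ u v hi
    rcases pair_infix_concat' hi with hi' | ⟨rfl, hl⟩
    · exact h1 _ _ hi'
    · rw [hα] at hl; injection hl with hl; rw [← hl]; exact h2

lemma P2_cons_iff {w : List Q.E} {y a : Q.E} (hy : w.head? = some y) :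
    P2 Q R (a :: w) ↔ P2 Q R w ∧ [a, y] ∈ R := by
  constructor
  · intro h
    exact ⟨fun u v hi => h u v (pair_infix_of_infix_cons hi),
      h a y (pair_infix_cons_self hy)⟩
  · rintro ⟨h1, h2⟩ u v hi
    rcases pair_infix_cons' hi with hi' | ⟨rfl, hl⟩
    · exact h1 _ _ hi'
    · rw [hy] at hl; injection hl with hl; rw [← hl]; exact h2

lemma Pf_cons_iff {w : List Q.E} {y a : Q.E} (hy : w.head? = some y) :
    Pf Q R (a :: w) ↔ Pf Q R w ∧ [a, y] ∉ R := by
  constructor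
  · intro h
    exact ⟨fun u v hi => h u v (pair_infix_of_infix_cons hi),
      h a y (pair_infix_cons_self hy)⟩
  · rintro ⟨h1, h2⟩ u v hi
    rcases pair_infix_cons' hi with hi' | ⟨rfl, hl⟩
    · exact h1 _ _ hi'
    · rw [hy] at hl; injection hl with hl; rw [← hl]; exact h2

lemma bm_ne_nil {m : ℕ} {x : Pr Q} (hx : Bm Q R m x) : x.1 ≠ [] ∧ x.2 ≠ [] :=
  ⟨hx.1.1, hx.2.2.2.1.1⟩

lemma rext_bm_iff {m : ℕ} {y : Pr Q} (hy : Bm Q R m y) {α β : Q.E}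
    (hα : y.1.getLast? = some α) (hβ : y.2.getLast? = some β) (b : Q.E) :
    Bm Q R (m + 1) (y.1 ++ [b], y.2 ++ [b]) ↔
      Q.tgt β = Q.src b ∧ [α, b] ∈ R ∧ [β, b] ∉ R := by
  obtain ⟨hp1, hlen, hP2, hp2, hPf, hsrc, htgt⟩ := hy
  have hn1 : y.1 ≠ [] := hp1.1
  have hn2 : y.2 ≠ [] := hp2.1
  have htαβ : Q.tgt α = Q.tgt β := by
    have h1 := ptgt_eq_some (Q := Q) hα
    have h2 := ptgt_eq_some (Q := Q) hβ
    rw [h1, h2] at htgt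
    injection htgt
  constructor
  · rintro ⟨hp1', _, hP2', hp2', hPf', _, _⟩
    have h1 := (path_concat_iff hα).1 hp1'
    have h2 := (P2_concat_iff hα).1 hP2'
    have h3 := (Pf_concat_iff hβ).1 hPf'
    exact ⟨by rw [← htαβ]; exact h1.2, h2.2, h3.2⟩
  · rintro ⟨hcomp, hab, hbb⟩
    refine ⟨(path_concat_iff hα).2 ⟨hp1, by rw [htαβ]; exact hcomp⟩,
      by rw [List.length_append, hlen]; rfl,
      (P2_concat_iff hα).2 ⟨hP2, hab⟩,
      (path_concat_iff hβ).2 ⟨hp2, hcomp⟩,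
      (Pf_concat_iff hβ).2 ⟨hPf, hbb⟩,
      by rw [psrc_concat hn1, psrc_concat hn2]; exact hsrc,
      by rw [ptgt_concat, ptgt_concat]⟩

lemma lext_bm_iff {m : ℕ} {y : Pr Q} (hy : Bm Q R m y) {α β : Q.E}
    (hα : y.1.head? = some α) (hβ : y.2.head? = some β) (a : Q.E) :
    Bm Q R (m + 1) (a :: y.1, a :: y.2) ↔
      Q.tgt a = Q.src β ∧ [a, α] ∈ R ∧ [a, β] ∉ R := by
  obtain ⟨hp1, hlen, hP2, hp2, hPf, hsrc, htgt⟩ := hy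
  have hn1 : y.1 ≠ [] := hp1.1
  have hn2 : y.2 ≠ [] := hp2.1
  have hsαβ : Q.src α = Q.src β := by
    have h1 := psrc_eq_some (Q := Q) hα
    have h2 := psrc_eq_some (Q := Q) hβ
    rw [h1, h2] at hsrc
    injection hsrc
  constructor
  · rintro ⟨hp1', _, hP2', hp2', hPf', _, _⟩
    have h1 := (path_cons_iff hα).1 hp1'
    have h2 := (P2_cons_iff hα).1 hP2'
    have h3 := (Pf_cons_iff hβ).1 hPf'
    exact ⟨by rw [← hsαβ]; exact h1.2, h2.2, h3.2⟩
  · rintro ⟨hcomp, hab, hbb⟩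
    refine ⟨(path_cons_iff hα).2 ⟨hp1, by rw [hsαβ]; exact hcomp⟩,
      by rw [List.length_cons, hlen],
      (P2_cons_iff hα).2 ⟨hP2, hab⟩,
      (path_cons_iff hβ).2 ⟨hp2, hcomp⟩,
      (Pf_cons_iff hβ).2 ⟨hPf, hbb⟩,
      rfl,
      by rw [ptgt_cons hn1, ptgt_cons hn2]; exact htgt⟩

end Ext

section Ext2
variable {Q : QuivData} {R : Set (List Q.E)}

lemma sharesLast_iff {x : Pr Q} {α β : Q.E} (hα : x.1.getLast? = some α)
    (hβ : x.2.getLast? = some β) : sharesLast Q x ↔ α = β := by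
  unfold sharesLast
  rw [hα, hβ]
  exact ⟨fun h => by injection h, fun h => by rw [h]⟩

lemma sharesFirst_iff {x : Pr Q} {α β : Q.E} (hα : x.1.head? = some α)
    (hβ : x.2.head? = some β) : sharesFirst Q x ↔ α = β := by
  unfold sharesFirst
  rw [hα, hβ]
  exact ⟨fun h => by injection h, fun h => by rw [h]⟩

lemma rext_exists (hs : StringData Q R) (hquad : ∀ r ∈ R, r.length = 2)
    {m : ℕ} {y : Pr Q} (hy : Bm Q R m y) (hnsl : ¬ sharesLast Q y)
    (hnri : ¬ rightI Q R y.2) :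
    ∃ b, Bm Q R (m + 1) (y.1 ++ [b], y.2 ++ [b]) := by
  obtain ⟨α, hα⟩ := exists_getLast (bm_ne_nil hy).1
  obtain ⟨β, hβ⟩ := exists_getLast (bm_ne_nil hy).2
  have hαβ : α ≠ β := fun h => hnsl ((sharesLast_iff hα hβ).2 h)
  have htαβ : Q.tgt α = Q.tgt β := by
    have h1 := ptgt_eq_some (Q := Q) hα
    have h2 := ptgt_eq_some (Q := Q) hβ
    have h3 := hy.2.2.2.2.2.2
    rw [h1, h2] at h3
    injection h3
  rw [rightI_iff hquad hβ hy.2.2.2.2.1] at hnri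
  push_neg at hnri
  obtain ⟨b, hcomp, hβb⟩ := hnri
  have hαb : [α, b] ∈ R := by
    by_contra hαb
    exact hαβ (hs.uniqLeft b α β (by rw [htαβ] at *; rw [hcomp]) (by rw [hcomp]) hαb hβb)
  exact ⟨b, (rext_bm_iff hy hα hβ b).2 ⟨hcomp.symm, hαb, hβb⟩⟩

lemma lext_exists (hs : StringData Q R) (hquad : ∀ r ∈ R, r.length = 2)
    {m : ℕ} {y : Pr Q} (hy : Bm Q R m y) (hnsf : ¬ sharesFirst Q y)
    (hnli : ¬ leftI Q R y.2) :
    ∃ a, Bm Q R (m + 1) (a :: y.1, a :: y.2) := by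
  obtain ⟨α, hα⟩ := exists_head (bm_ne_nil hy).1
  obtain ⟨β, hβ⟩ := exists_head (bm_ne_nil hy).2
  have hαβ : α ≠ β := fun h => hnsf ((sharesFirst_iff hα hβ).2 h)
  have hsαβ : Q.src α = Q.src β := by
    have h1 := psrc_eq_some (Q := Q) hα
    have h2 := psrc_eq_some (Q := Q) hβ
    have := hy.2.2.2.2.2.1
    rw [h1, h2] at this
    injection this
  rw [leftI_iff hquad hβ hy.2.2.2.2.1] at hnli
  push_neg at hnli
  obtain ⟨a, hcomp, hab⟩ := hnli
  have haα : [a, α] ∈ R := by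
    by_contra haα
    exact hαβ (hs.uniqRight a α β (by rw [hcomp, hsαβ]) (by rw [hcomp]) haα hab)
  exact ⟨a, (lext_bm_iff hy hα hβ a).2 ⟨hcomp, haα, hab⟩⟩

lemma rext_unique (hs : StringData Q R) {m : ℕ} {y : Pr Q} (hy : Bm Q R m y)
    {b b' : Q.E} (hb : Bm Q R (m + 1) (y.1 ++ [b], y.2 ++ [b]))
    (hb' : Bm Q R (m + 1) (y.1 ++ [b'], y.2 ++ [b'])) : b = b' := by
  obtain ⟨α, hα⟩ := exists_getLast (bm_ne_nil hy).1
  obtain ⟨β, hβ⟩ := exists_getLast (bm_ne_nil hy).2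
  obtain ⟨h1, _, h3⟩ := (rext_bm_iff hy hα hβ b).1 hb
  obtain ⟨h1', _, h3'⟩ := (rext_bm_iff hy hα hβ b').1 hb'
  exact hs.uniqRight β b b' h1.symm.symm h1' h3 h3'

lemma lext_unique (hs : StringData Q R) {m : ℕ} {y : Pr Q} (hy : Bm Q R m y)
    {a a' : Q.E} (ha : Bm Q R (m + 1) (a :: y.1, a :: y.2))
    (ha' : Bm Q R (m + 1) (a' :: y.1, a' :: y.2)) : a = a' := by
  obtain ⟨α, hα⟩ := exists_head (bm_ne_nil hy).1
  obtain ⟨β, hβ⟩ := exists_head (bm_ne_nil hy).2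
  obtain ⟨h1, _, h3⟩ := (lext_bm_iff hy hα hβ a).1 ha
  obtain ⟨h1', _, h3'⟩ := (lext_bm_iff hy hα hβ a').1 ha'
  exact hs.uniqLeft β a a' h1 h1' h3 h3'

lemma rext_not_sl {m : ℕ} {y : Pr Q} (hy : Bm Q R m y) (hsl : sharesLast Q y)
    (b : Q.E) : ¬ Bm Q R (m + 1) (y.1 ++ [b], y.2 ++ [b]) := by
  obtain ⟨α, hα⟩ := exists_getLast (bm_ne_nil hy).1
  obtain ⟨β, hβ⟩ := exists_getLast (bm_ne_nil hy).2
  have hαβ := (sharesLast_iff hα hβ).1 hsl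
  intro hb
  obtain ⟨_, h2, h3⟩ := (rext_bm_iff hy hα hβ b).1 hb
  rw [hαβ] at h2
  exact h3 h2

lemma lext_not_sf {m : ℕ} {y : Pr Q} (hy : Bm Q R m y) (hsf : sharesFirst Q y)
    (a : Q.E) : ¬ Bm Q R (m + 1) (a :: y.1, a :: y.2) := by
  obtain ⟨α, hα⟩ := exists_head (bm_ne_nil hy).1
  obtain ⟨β, hβ⟩ := exists_head (bm_ne_nil hy).2
  have hαβ := (sharesFirst_iff hα hβ).1 hsf
  intro hb
  obtain ⟨_, h2, h3⟩ := (lext_bm_iff hy hα hβ a).1 hb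
  rw [hαβ] at h2
  exact h3 h2

lemma rext_not_ri (hquad : ∀ r ∈ R, r.length = 2) {m : ℕ} {y : Pr Q}
    (hy : Bm Q R m y) (hri : rightI Q R y.2) (b : Q.E) :
    ¬ Bm Q R (m + 1) (y.1 ++ [b], y.2 ++ [b]) := by
  obtain ⟨α, hα⟩ := exists_getLast (bm_ne_nil hy).1
  obtain ⟨β, hβ⟩ := exists_getLast (bm_ne_nil hy).2
  rw [rightI_iff hquad hβ hy.2.2.2.2.1] at hri
  intro hb
  obtain ⟨h1, _, h3⟩ := (rext_bm_iff hy hα hβ b).1 hb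
  exact h3 (hri b h1.symm)

lemma lext_not_li (hquad : ∀ r ∈ R, r.length = 2) {m : ℕ} {y : Pr Q}
    (hy : Bm Q R m y) (hli : leftI Q R y.2) (a : Q.E) :
    ¬ Bm Q R (m + 1) (a :: y.1, a :: y.2) := by
  obtain ⟨α, hα⟩ := exists_head (bm_ne_nil hy).1
  obtain ⟨β, hβ⟩ := exists_head (bm_ne_nil hy).2
  rw [leftI_iff hquad hβ hy.2.2.2.2.1] at hli
  intro hb
  obtain ⟨h1, _, h3⟩ := (lext_bm_iff hy hα hβ a).1 hb
  exact h3 (hli a h1)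

end Ext2

section Strip
variable {Q : QuivData} {R : Set (List Q.E)}

lemma no_parallel_path (hs : StringData Q R) {u : List Q.E} (hu : IsPathL Q u)
    {v : Q.V} (h1 : psrc Q u = some v) (h2 : ptgt Q u = some v) : False := by
  have := hs.triangular u hu
  rw [h1, h2] at this
  exact this rfl

lemma strip_last (hs : StringData Q R) (hquad : ∀ r ∈ R, r.length = 2)
    {m : ℕ} (hm : 1 ≤ m) {x : Pr Q} (hx : Bm Q R (m + 1) x)
    (hsl : sharesLast Q x) :
    ∃ (y : Pr Q) (b : Q.E), x = (y.1 ++ [b], y.2 ++ [b]) ∧ Bm Q R m y ∧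
      ¬ sharesLast Q y ∧ ¬ rightI Q R y.2 := by
  obtain ⟨hp1, hlen, hP2, hp2, hPf, hsrc, htgt⟩ := hx
  obtain ⟨u, b, hu⟩ := (List.eq_nil_or_concat x.1).resolve_left hp1.1
  rw [List.concat_eq_append] at hu
  have hb2 : x.2.getLast? = some b := by
    have : x.1.getLast? = some b := by rw [hu]; exact List.getLast?_concat
    rw [← hsl]; exact this
  obtain ⟨v, hv⟩ := getLast?_eq_some_iff'.1 hb2
  have hun : u ≠ [] := by
    rintro rfl
    rw [hu] at hlen
    simp at hlen
    omega
  obtain ⟨α, hα⟩ := exists_getLast hun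
  have hpu : IsPathL Q u ∧ Q.tgt α = Q.src b := by
    rw [← path_concat_iff hα, ← hu]; exact hp1
  have hvn : v ≠ [] := by
    rintro rfl
    -- x.2 = [b]; derive a cycle contradiction
    have hps : psrc Q u = some (Q.src b) := by
      have e1 : psrc Q x.1 = psrc Q u := by rw [hu]; exact psrc_concat hun b
      rw [← e1, hsrc, hv]
      rfl
    exact no_parallel_path hs hpu.1 hps (by rw [ptgt_eq_some hα, hpu.2])
  obtain ⟨β, hβ⟩ := exists_getLast hvn
  have hpv : IsPathL Q v ∧ Q.tgt β = Q.src b := by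
    rw [← path_concat_iff hβ, ← hv]; exact hp2
  have hP2u : P2 Q R u ∧ [α, b] ∈ R := by
    rw [← P2_concat_iff hα, ← hu]; exact hP2
  have hPfv : Pf Q R v ∧ [β, b] ∉ R := by
    rw [← Pf_concat_iff hβ, ← hv]; exact hPf
  have hBy : Bm Q R m (u, v) := by
    refine ⟨hpu.1, ?_, hP2u.1, hpv.1, hPfv.1, ?_, ?_⟩
    · show u.length = m
      rw [hu, List.length_append] at hlen
      simp at hlen
      omega
    · show psrc Q u = psrc Q v
      have e1 : psrc Q x.1 = psrc Q u := by rw [hu]; exact psrc_concat hun b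
      have e2 : psrc Q x.2 = psrc Q v := by rw [hv]; exact psrc_concat hvn b
      rw [← e1, ← e2]; exact hsrc
    · show ptgt Q u = ptgt Q v
      rw [ptgt_eq_some hα, ptgt_eq_some hβ, hpu.2, hpv.2]
  refine ⟨(u, v), b, ?_, hBy, ?_, ?_⟩
  · rw [Prod.ext_iff]; exact ⟨hu, hv⟩
  · intro hsl'
    have hαβ := (sharesLast_iff (x := (u, v)) hα hβ).1 hsl'
    rw [hαβ] at hP2u
    exact hPfv.2 hP2u.2
  · intro hri
    rw [rightI_iff hquad hβ hPfv.1] at hri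
    exact hPfv.2 (hri b hpv.2.symm)

lemma strip_first (hs : StringData Q R) (hquad : ∀ r ∈ R, r.length = 2)
    {m : ℕ} (hm : 1 ≤ m) {x : Pr Q} (hx : Bm Q R (m + 1) x)
    (hsf : sharesFirst Q x) :
    ∃ (y : Pr Q) (a : Q.E), x = (a :: y.1, a :: y.2) ∧ Bm Q R m y ∧
      ¬ sharesFirst Q y ∧ ¬ leftI Q R y.2 := by
  obtain ⟨hp1, hlen, hP2, hp2, hPf, hsrc, htgt⟩ := hx
  obtain ⟨a, hx1⟩ := exists_head hp1.1
  obtain ⟨u, hu⟩ := head?_eq_some_iff'.1 hx1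
  have hb2 : x.2.head? = some a := by rw [← hsf]; exact hx1
  obtain ⟨v, hv⟩ := head?_eq_some_iff'.1 hb2
  have hun : u ≠ [] := by
    rintro rfl
    rw [hu] at hlen
    simp at hlen
    omega
  obtain ⟨α, hα⟩ := exists_head hun
  have hpu : IsPathL Q u ∧ Q.tgt a = Q.src α := by
    rw [← path_cons_iff hα, ← hu]; exact hp1
  have hvn : v ≠ [] := by
    rintro rfl
    -- x.2 = [a]; derive a cycle contradiction
    obtain ⟨ω, hω⟩ := exists_getLast hun
    have hpt : ptgt Q u = some (Q.tgt a) := by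
      have e1 : ptgt Q x.1 = ptgt Q u := by rw [hu]; exact ptgt_cons hun a
      have e2 : ptgt Q ([a] : List Q.E) = some (Q.tgt a) := rfl
      rw [← e1, htgt, hv, e2]
    exact no_parallel_path hs hpu.1 (by rw [psrc_eq_some hα, ← hpu.2]) hpt
  obtain ⟨β, hβ⟩ := exists_head hvn
  have hpv : IsPathL Q v ∧ Q.tgt a = Q.src β := by
    rw [← path_cons_iff hβ, ← hv]; exact hp2
  have hP2u : P2 Q R u ∧ [a, α] ∈ R := by
    rw [← P2_cons_iff hα, ← hu]; exact hP2
  have hPfv : Pf Q R v ∧ [a, β] ∉ R := by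
    rw [← Pf_cons_iff hβ, ← hv]; exact hPf
  have hBy : Bm Q R m (u, v) := by
    refine ⟨hpu.1, ?_, hP2u.1, hpv.1, hPfv.1, ?_, ?_⟩
    · show u.length = m
      rw [hu, List.length_cons] at hlen
      omega
    · show psrc Q u = psrc Q v
      rw [psrc_eq_some hα, psrc_eq_some hβ, ← hpu.2, ← hpv.2]
    · show ptgt Q u = ptgt Q v
      have e1 : ptgt Q x.1 = ptgt Q u := by rw [hu]; exact ptgt_cons hun a
      have e2 : ptgt Q x.2 = ptgt Q v := by rw [hv]; exact ptgt_cons hvn a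
      rw [← e1, ← e2]; exact htgt
  refine ⟨(u, v), a, ?_, hBy, ?_, ?_⟩
  · rw [Prod.ext_iff]; exact ⟨hu, hv⟩
  · intro hsf'
    have hαβ := (sharesFirst_iff (x := (u, v)) hα hβ).1 hsf'
    rw [hαβ] at hP2u
    exact hPfv.2 hP2u.2
  · intro hli
    rw [leftI_iff hquad hβ hPfv.1] at hli
    exact hPfv.2 (hli a hpv.2)

end Strip

section Pm01
variable {Q : QuivData} {R : Set (List Q.E)}

lemma pm01_empty (hs : StringData Q R) (hquad : ∀ r ∈ R, r.length = 2) {n : ℕ}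
    (hn : 2 ≤ n) : pm01 Q R n = ∅ := by
  ext x
  simp only [pm01, cls01, Set.mem_setOf_eq, Set.mem_empty_iff_false, iff_false]
  rintro ⟨⟨hpair, hnsf, hsl⟩, hli, hnlih⟩
  apply hnlih
  obtain ⟨m, rfl⟩ : ∃ m, n = m + 1 := ⟨n - 1, by omega⟩
  have hx : Bm Q R (m + 1) x := (pairSet_iff hquad (by omega)).1 hpair
  obtain ⟨y, b, hEq, hy, _, _⟩ := strip_last hs hquad (by omega) hx hsl
  have hx2 : x.2 = y.2 ++ [b] := by rw [hEq]
  have hy2n : y.2 ≠ [] := (bm_ne_nil hy).2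
  obtain ⟨hd, hh⟩ := exists_head hy2n
  have hxh : x.2.head? = some hd := by rw [hx2, head?_concat hy2n]; exact hh
  have hPfx : Pf Q R x.2 := hx.2.2.2.2.1
  have hPfy : Pf Q R y.2 := hy.2.2.2.2.1
  intro a ha
  have h1 : inI Q R (a :: x.2) := hli a ha
  have h2 : [a, hd] ∈ R := (inI_cons_iff hquad hxh hPfx).1 h1
  have h3 : x.2.dropLast = y.2 := by rw [hx2]; simp
  rw [h3]
  exact (inI_cons_iff hquad hh hPfy).2 h2

end Pm01

section Coeff
variable {Q : QuivData} {R : Set (List Q.E)} {k : Type} [Field k]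

lemma coeff_eval (hquad : ∀ r ∈ R, r.length = 2) {m : ℕ} (hm : 2 ≤ m) {x y : Pr Q}
    (hx : x.1.length = m) (hy : y.1.length = m - 1) :
    coeffF Q k R m y x =
      (if ∃ b, x.1 = y.1 ++ [b] ∧ x.2 = y.2 ++ [b] then ((-1 : k) ^ m) else 0) +
      (if ∃ a, x.1 = a :: y.1 ∧ x.2 = a :: y.2 then (1 : k) else 0) := by
  unfold coeffF
  have hsub : (Function.support fun c : Iv =>
      if c.1 < c.2 ∧ c.2 ≤ x.1.length ∧ ¬(c.1 = 0 ∧ c.2 = x.1.length) ∧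
          y.1 = slice Q x.1 c ∧ x.2 = x.1.take c.1 ++ y.2 ++ x.1.drop c.2 then
        (if c.1 = 0 then (-1 : k) ^ m else 1) else 0) ⊆
      (({(0, m - 1), (1, m)} : Finset Iv) : Set Iv) := by
    intro c hc
    simp only [Function.mem_support] at hc
    split at hc
    case isTrue h =>
      obtain ⟨h1, h2, h3, h4, h5⟩ := h
      have hlen : (m - 1 : ℕ) = min (c.2 - c.1) (x.1.length - c.1) := by
        rw [← hy, h4]
        unfold slice
        rw [List.length_take, List.length_drop]
      rw [hx] at h2 h3 hlen
      simp only [Finset.coe_insert, Finset.coe_singleton, Set.mem_insert_iff,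
        Set.mem_singleton_iff]
      have hcase : c.1 = 0 ∧ c.2 = m - 1 ∨ c.1 = 1 ∧ c.2 = m := by omega
      rcases hcase with ⟨ha, hb⟩ | ⟨ha, hb⟩
      · left; rw [Prod.ext_iff]; exact ⟨ha, hb⟩
      · right; rw [Prod.ext_iff]; exact ⟨ha, hb⟩
    case isFalse h => exact absurd rfl hc
  rw [finsum_eq_finset_sum_of_support_subset _ hsub,
    Finset.sum_pair (by intro h; rw [Prod.ext_iff] at h; simp at h)]
  congr 1
  · by_cases hA : ∃ b, x.1 = y.1 ++ [b] ∧ x.2 = y.2 ++ [b]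
    · obtain ⟨b, hb1, hb2⟩ := hA
      have hc : ((0, m - 1) : Iv).1 < ((0, m - 1) : Iv).2 ∧
          ((0, m - 1) : Iv).2 ≤ x.1.length ∧
          ¬(((0, m - 1) : Iv).1 = 0 ∧ ((0, m - 1) : Iv).2 = x.1.length) ∧
          y.1 = slice Q x.1 (0, m - 1) ∧
          x.2 = x.1.take ((0, m - 1) : Iv).1 ++ y.2 ++ x.1.drop ((0, m - 1) : Iv).2 := by
        refine ⟨by show 0 < m - 1; omega, by show m - 1 ≤ x.1.length; omega,
          by show ¬(0 = 0 ∧ m - 1 = x.1.length); omega, ?_, ?_⟩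
        · unfold slice
          show y.1 = (x.1.drop 0).take (m - 1 - 0)
          rw [List.drop_zero, Nat.sub_zero, hb1, List.take_left' hy]
        · show x.2 = x.1.take 0 ++ y.2 ++ x.1.drop (m - 1)
          rw [List.take_zero, hb1, List.drop_left' hy]
          simpa using hb2
      rw [if_pos hc, if_pos rfl, if_pos ⟨b, hb1, hb2⟩]
    · rw [if_neg hA, if_neg]
      rintro ⟨h1, h2, h3, h4, h5⟩
      apply hA
      have hd : (x.1.drop (m - 1)).length = 1 := by
        rw [List.length_drop, hx]; omega
      obtain ⟨b, hb⟩ := List.length_eq_one_iff.1 hd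
      refine ⟨b, ?_, ?_⟩
      · have := List.take_append_drop (m - 1) x.1
        unfold slice at h4
        rw [List.drop_zero, Nat.sub_zero] at h4
        rw [← this, ← h4, hb]
      · rw [List.take_zero] at h5
        rw [h5, hb]
        simp
  · by_cases hB : ∃ a, x.1 = a :: y.1 ∧ x.2 = a :: y.2
    · obtain ⟨a, hb1, hb2⟩ := hB
      have hc : ((1, m) : Iv).1 < ((1, m) : Iv).2 ∧
          ((1, m) : Iv).2 ≤ x.1.length ∧
          ¬(((1, m) : Iv).1 = 0 ∧ ((1, m) : Iv).2 = x.1.length) ∧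
          y.1 = slice Q x.1 (1, m) ∧
          x.2 = x.1.take ((1, m) : Iv).1 ++ y.2 ++ x.1.drop ((1, m) : Iv).2 := by
        refine ⟨by show 1 < m; omega, by show m ≤ x.1.length; omega,
          by show ¬(1 = 0 ∧ m = x.1.length); omega, ?_, ?_⟩
        · unfold slice
          show y.1 = (x.1.drop 1).take (m - 1)
          rw [hb1, List.drop_one, List.tail_cons, ← hy, List.take_length]
        · show x.2 = x.1.take 1 ++ y.2 ++ x.1.drop m
          rw [List.drop_eq_nil_of_le (by omega), hb1]
          simpa using hb2
      rw [if_pos hc, if_neg (by show ¬(1 = 0); omega), if_pos ⟨a, hb1, hb2⟩]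
    · rw [if_neg hB, if_neg]
      rintro ⟨h1, h2, h3, h4, h5⟩
      apply hB
      obtain ⟨a, t, ht⟩ : ∃ a t, x.1 = a :: t := by
        cases hxx : x.1 with
        | nil => rw [hxx] at hx; simp at hx; omega
        | cons a t => exact ⟨a, t, rfl⟩
      refine ⟨a, ?_, ?_⟩
      · unfold slice at h4
        rw [ht] at h4 ⊢
        rw [List.drop_one, List.tail_cons] at h4
        have htl : t.length = m - 1 := by
          rw [ht] at hx; simp at hx; omega
        rw [← htl, List.take_length] at h4
        rw [h4]
      · rw [h5, ht]
        rw [List.drop_eq_nil_of_le (by rw [ht] at hx; simp at hx ⊢; omega)]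
        simp

lemma leftI_invariant {γ δ : List Q.E} (hquad : ∀ r ∈ R, r.length = 2)
    (hγ : Pf Q R γ) (hδ : Pf Q R δ) {h : Q.E} (hγh : γ.head? = some h)
    (hδh : δ.head? = some h) : leftI Q R γ ↔ leftI Q R δ := by
  rw [leftI_iff hquad hγh hγ, leftI_iff hquad hδh hδ]

lemma rightI_invariant {γ δ : List Q.E} (hquad : ∀ r ∈ R, r.length = 2)
    (hγ : Pf Q R γ) (hδ : Pf Q R δ) {t : Q.E} (hγt : γ.getLast? = some t)
    (hδt : δ.getLast? = some t) : rightI Q R γ ↔ rightI Q R δ := by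
  rw [rightI_iff hquad hγt hγ, rightI_iff hquad hδt hδ]

lemma rext_class (hs : StringData Q R) (hquad : ∀ r ∈ R, r.length = 2)
    {m : ℕ} {y : Pr Q} (hy : Bm Q R m y) (hnsl : ¬ sharesLast Q y)
    (hnri : ¬ rightI Q R y.2) :
    ∃ xR : Pr Q, Bm Q R (m + 1) xR ∧ (∃ b, xR.1 = y.1 ++ [b] ∧ xR.2 = y.2 ++ [b]) ∧
      sharesLast Q xR ∧ (sharesFirst Q xR ↔ sharesFirst Q y) ∧
      (leftI Q R xR.2 ↔ leftI Q R y.2) ∧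
      (∀ x : Pr Q, Bm Q R (m + 1) x →
        (∃ b, x.1 = y.1 ++ [b] ∧ x.2 = y.2 ++ [b]) → x = xR) := by
  obtain ⟨b, hb⟩ := rext_exists hs hquad hy hnsl hnri
  have hn1 : y.1 ≠ [] := (bm_ne_nil hy).1
  have hn2 : y.2 ≠ [] := (bm_ne_nil hy).2
  refine ⟨(y.1 ++ [b], y.2 ++ [b]), hb, ⟨b, rfl, rfl⟩, ?_, ?_, ?_, ?_⟩
  · show (y.1 ++ [b]).getLast? = (y.2 ++ [b]).getLast?
    rw [List.getLast?_concat, List.getLast?_concat]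
  · show (y.1 ++ [b]).head? = (y.2 ++ [b]).head? ↔ _
    rw [head?_concat hn1, head?_concat hn2]
    exact Iff.rfl
  · obtain ⟨h, hh⟩ := exists_head hn2
    exact leftI_invariant hquad hb.2.2.2.2.1 hy.2.2.2.2.1
      (by show (y.2 ++ [b]).head? = some h; rw [head?_concat hn2]; exact hh) hh
  · rintro x hx ⟨b', hb1, hb2⟩
    have hbb : b' = b := rext_unique hs hy (by rw [← hb1, ← hb2]; exact hx) hb
    rw [Prod.ext_iff]
    subst hbb
    exact ⟨hb1, hb2⟩

lemma lext_class (hs : StringData Q R) (hquad : ∀ r ∈ R, r.length = 2)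
    {m : ℕ} {y : Pr Q} (hy : Bm Q R m y) (hnsf : ¬ sharesFirst Q y)
    (hnli : ¬ leftI Q R y.2) :
    ∃ xL : Pr Q, Bm Q R (m + 1) xL ∧ (∃ a, xL.1 = a :: y.1 ∧ xL.2 = a :: y.2) ∧
      sharesFirst Q xL ∧ (sharesLast Q xL ↔ sharesLast Q y) ∧
      (rightI Q R xL.2 ↔ rightI Q R y.2) ∧
      (∀ x : Pr Q, Bm Q R (m + 1) x →
        (∃ a, x.1 = a :: y.1 ∧ x.2 = a :: y.2) → x = xL) := by
  obtain ⟨a, ha⟩ := lext_exists hs hquad hy hnsf hnli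
  have hn1 : y.1 ≠ [] := (bm_ne_nil hy).1
  have hn2 : y.2 ≠ [] := (bm_ne_nil hy).2
  refine ⟨(a :: y.1, a :: y.2), ha, ⟨a, rfl, rfl⟩, rfl, ?_, ?_, ?_⟩
  · show (a :: y.1).getLast? = (a :: y.2).getLast? ↔ _
    rw [getLast?_cons_ne hn1, getLast?_cons_ne hn2]
    exact Iff.rfl
  · obtain ⟨t, ht⟩ := exists_getLast hn2
    exact rightI_invariant hquad ha.2.2.2.2.1 hy.2.2.2.2.1
      (by show (a :: y.2).getLast? = some t; rw [getLast?_cons_ne hn2]; exact ht) ht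
  · rintro x hx ⟨a', ha1, ha2⟩
    have haa : a' = a := lext_unique hs hy (by rw [← ha1, ← ha2]; exact hx) ha
    rw [Prod.ext_iff]
    subst haa
    exact ⟨ha1, ha2⟩

lemma strip_last_class (hs : StringData Q R) (hquad : ∀ r ∈ R, r.length = 2)
    {m : ℕ} (hm : 1 ≤ m) {x : Pr Q} (hx : Bm Q R (m + 1) x)
    (hsl : sharesLast Q x) :
    ∃ y : Pr Q, Bm Q R m y ∧ (∃ b, x.1 = y.1 ++ [b] ∧ x.2 = y.2 ++ [b]) ∧
      ¬ sharesLast Q y ∧ ¬ rightI Q R y.2 ∧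
      (sharesFirst Q y ↔ sharesFirst Q x) ∧
      (leftI Q R y.2 ↔ leftI Q R x.2) ∧
      (∀ y' : Pr Q, (∃ b, x.1 = y'.1 ++ [b] ∧ x.2 = y'.2 ++ [b]) → y' = y) := by
  obtain ⟨y, b, hEq, hy, hnsl, hnri⟩ := strip_last hs hquad hm hx hsl
  have hx1 : x.1 = y.1 ++ [b] := by rw [hEq]
  have hx2 : x.2 = y.2 ++ [b] := by rw [hEq]
  have hn1 : y.1 ≠ [] := (bm_ne_nil hy).1
  have hn2 : y.2 ≠ [] := (bm_ne_nil hy).2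
  refine ⟨y, hy, ⟨b, hx1, hx2⟩, hnsl, hnri, ?_, ?_, ?_⟩
  · show _ ↔ x.1.head? = x.2.head?
    rw [hx1, hx2, head?_concat hn1, head?_concat hn2]
    exact Iff.rfl
  · obtain ⟨h, hh⟩ := exists_head hn2
    exact leftI_invariant hquad hy.2.2.2.2.1 hx.2.2.2.2.1 hh
      (by rw [hx2]; show (y.2 ++ [b]).head? = some h; rw [head?_concat hn2]; exact hh)
  · rintro y' ⟨b', hb1, hb2⟩
    rw [hx1] at hb1
    rw [hx2] at hb2
    obtain ⟨e1, e2⟩ := List.append_inj' hb1 rfl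
    obtain ⟨e3, _⟩ := List.append_inj' hb2 rfl
    rw [Prod.ext_iff]
    exact ⟨e1.symm, e3.symm⟩

lemma strip_first_class (hs : StringData Q R) (hquad : ∀ r ∈ R, r.length = 2)
    {m : ℕ} (hm : 1 ≤ m) {x : Pr Q} (hx : Bm Q R (m + 1) x)
    (hsf : sharesFirst Q x) :
    ∃ y : Pr Q, Bm Q R m y ∧ (∃ a, x.1 = a :: y.1 ∧ x.2 = a :: y.2) ∧
      ¬ sharesFirst Q y ∧ ¬ leftI Q R y.2 ∧
      (sharesLast Q y ↔ sharesLast Q x) ∧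
      (rightI Q R y.2 ↔ rightI Q R x.2) ∧
      (∀ y' : Pr Q, (∃ a, x.1 = a :: y'.1 ∧ x.2 = a :: y'.2) → y' = y) := by
  obtain ⟨y, a, hEq, hy, hnsf, hnli⟩ := strip_first hs hquad hm hx hsf
  have hx1 : x.1 = a :: y.1 := by rw [hEq]
  have hx2 : x.2 = a :: y.2 := by rw [hEq]
  have hn1 : y.1 ≠ [] := (bm_ne_nil hy).1
  have hn2 : y.2 ≠ [] := (bm_ne_nil hy).2
  refine ⟨y, hy, ⟨a, hx1, hx2⟩, hnsf, hnli, ?_, ?_, ?_⟩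
  · show _ ↔ x.1.getLast? = x.2.getLast?
    rw [hx1, hx2, getLast?_cons_ne hn1, getLast?_cons_ne hn2]
    exact Iff.rfl
  · obtain ⟨t, ht⟩ := exists_getLast hn2
    exact rightI_invariant hquad hy.2.2.2.2.1 hx.2.2.2.2.1 ht
      (by rw [hx2]; show (a :: y.2).getLast? = some t; rw [getLast?_cons_ne hn2]; exact ht)
  · rintro y' ⟨a', hb1, hb2⟩
    rw [hx1] at hb1
    rw [hx2] at hb2
    injection hb1 with _ e1
    injection hb2 with _ e2
    rw [Prod.ext_iff]
    exact ⟨e1.symm, e2.symm⟩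

lemma sl_of_append_form {x y : Pr Q} {b : Q.E} (h1 : x.1 = y.1 ++ [b])
    (h2 : x.2 = y.2 ++ [b]) : sharesLast Q x := by
  show x.1.getLast? = x.2.getLast?
  rw [h1, h2, List.getLast?_concat, List.getLast?_concat]

lemma sf_of_cons_form {x y : Pr Q} {a : Q.E} (h1 : x.1 = a :: y.1)
    (h2 : x.2 = a :: y.2) : sharesFirst Q x := by
  show x.1.head? = x.2.head?
  rw [h1, h2]
  rfl

/-- The contracting-homotopy matrix entries. -/
def Hc (Q : QuivData) (R : Set (List Q.E)) (k : Type) [Field k] (m : ℕ)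
    (u v : Pr Q) : k :=
  if ∃ b, v.1 = u.1 ++ [b] ∧ v.2 = u.2 ++ [b] then (-1 : k) ^ m
  else if (¬ sharesLast Q v ∧ rightI Q R v.2) ∧ ∃ a, v.1 = a :: u.1 ∧ v.2 = a :: u.2
    then 1 else 0

lemma Hc_append {m : ℕ} {x z : Pr Q} {b : Q.E} (h1 : x.1 = z.1 ++ [b])
    (h2 : x.2 = z.2 ++ [b]) (u : Pr Q) :
    Hc Q R k m u x = if u = z then (-1 : k) ^ m else 0 := by
  unfold Hc
  by_cases h : u = z
  · subst h
    rw [if_pos ⟨b, h1, h2⟩, if_pos rfl]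
  · rw [if_neg, if_neg, if_neg h]
    · rintro ⟨⟨hnsl', _⟩, _⟩
      exact hnsl' (sl_of_append_form h1 h2)
    · rintro ⟨b', hb1, hb2⟩
      rw [h1] at hb1
      rw [h2] at hb2
      obtain ⟨e1, _⟩ := List.append_inj' hb1 rfl
      obtain ⟨e2, _⟩ := List.append_inj' hb2 rfl
      exact h (Prod.ext_iff.2 ⟨e1.symm, e2.symm⟩)

lemma Hc_cons {m : ℕ} {x z : Pr Q} {a : Q.E} (h1 : x.1 = a :: z.1)
    (h2 : x.2 = a :: z.2) (hnsl : ¬ sharesLast Q x) (u : Pr Q) :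
    Hc Q R k m u x = if rightI Q R x.2 ∧ u = z then 1 else 0 := by
  unfold Hc
  rw [if_neg]
  · by_cases h : rightI Q R x.2 ∧ u = z
    · obtain ⟨hri, rfl⟩ := h
      rw [if_pos ⟨⟨hnsl, hri⟩, ⟨a, h1, h2⟩⟩, if_pos ⟨hri, rfl⟩]
    · rw [if_neg, if_neg h]
      rintro ⟨⟨_, hri⟩, ⟨a', ha1, ha2⟩⟩
      apply h
      rw [h1] at ha1
      rw [h2] at ha2
      injection ha1 with _ e1
      injection ha2 with _ e2
      exact ⟨hri, (Prod.ext_iff.2 ⟨e1.symm, e2.symm⟩)⟩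
  · rintro ⟨b, hb1, hb2⟩
    exact hnsl (sl_of_append_form hb1 hb2)

lemma Hc_zero_nsl_nsf {m : ℕ} {x : Pr Q} (hnsl : ¬ sharesLast Q x)
    (hnsf : ¬ sharesFirst Q x) (u : Pr Q) : Hc Q R k m u x = 0 := by
  unfold Hc
  rw [if_neg, if_neg]
  · rintro ⟨_, ⟨a, ha1, ha2⟩⟩
    exact hnsf (sf_of_cons_form ha1 ha2)
  · rintro ⟨b, hb1, hb2⟩
    exact hnsl (sl_of_append_form hb1 hb2)

lemma Hc_zero_nsl_nri {m : ℕ} {x : Pr Q} (hnsl : ¬ sharesLast Q x)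
    (hnri : ¬ rightI Q R x.2) (u : Pr Q) : Hc Q R k m u x = 0 := by
  unfold Hc
  rw [if_neg, if_neg]
  · rintro ⟨⟨_, hri⟩, _⟩
    exact hnri hri
  · rintro ⟨b, hb1, hb2⟩
    exact hnsl (sl_of_append_form hb1 hb2)

lemma ind_rext_eq (hs : StringData Q R) {j : ℕ} {z u x0 : Pr Q} (hz : Bm Q R j z)
    (hu : Bm Q R (j + 1) u) (hx0 : Bm Q R (j + 1) x0)
    (hform : ∃ b, x0.1 = z.1 ++ [b] ∧ x0.2 = z.2 ++ [b]) :
    (∃ b, u.1 = z.1 ++ [b] ∧ u.2 = z.2 ++ [b]) ↔ u = x0 := by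
  obtain ⟨b0, hb01, hb02⟩ := hform
  constructor
  · rintro ⟨b, hb1, hb2⟩
    have hval : b = b0 := by
      refine rext_unique hs hz ?_ ?_
      · rw [← hb1, ← hb2]; exact hu
      · rw [← hb01, ← hb02]; exact hx0
    rw [Prod.ext_iff, hb1, hb2, hb01, hb02, hval]
    exact ⟨rfl, rfl⟩
  · rintro rfl
    exact ⟨b0, hb01, hb02⟩

lemma ind_lext_eq (hs : StringData Q R) {j : ℕ} {z u x0 : Pr Q} (hz : Bm Q R j z)
    (hu : Bm Q R (j + 1) u) (hx0 : Bm Q R (j + 1) x0)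
    (hform : ∃ a, x0.1 = a :: z.1 ∧ x0.2 = a :: z.2) :
    (∃ a, u.1 = a :: z.1 ∧ u.2 = a :: z.2) ↔ u = x0 := by
  obtain ⟨a0, ha01, ha02⟩ := hform
  constructor
  · rintro ⟨a, ha1, ha2⟩
    have hval : a = a0 := by
      refine lext_unique hs hz ?_ ?_
      · rw [← ha1, ← ha2]; exact hu
      · rw [← ha01, ← ha02]; exact hx0
    rw [Prod.ext_iff, ha1, ha2, ha01, ha02, hval]
    exact ⟨rfl, rfl⟩
  · rintro rfl
    exact ⟨a0, ha01, ha02⟩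

lemma ind_rext_empty (hquad : ∀ r ∈ R, r.length = 2) {j : ℕ} {z u : Pr Q}
    (hz : Bm Q R j z) (hu : Bm Q R (j + 1) u)
    (h : sharesLast Q z ∨ rightI Q R z.2) :
    ¬ ∃ b, u.1 = z.1 ++ [b] ∧ u.2 = z.2 ++ [b] := by
  rintro ⟨b, hb1, hb2⟩
  have hBm : Bm Q R (j + 1) (z.1 ++ [b], z.2 ++ [b]) := by
    rw [← hb1, ← hb2]; exact hu
  rcases h with h | h
  · exact rext_not_sl hz h b hBm
  · exact rext_not_ri hquad hz h b hBm

lemma ind_lext_empty (hquad : ∀ r ∈ R, r.length = 2) {j : ℕ} {z u : Pr Q}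
    (hz : Bm Q R j z) (hu : Bm Q R (j + 1) u)
    (h : sharesFirst Q z ∨ leftI Q R z.2) :
    ¬ ∃ a, u.1 = a :: z.1 ∧ u.2 = a :: z.2 := by
  rintro ⟨a, ha1, ha2⟩
  have hBm : Bm Q R (j + 1) (a :: z.1, a :: z.2) := by
    rw [← ha1, ← ha2]; exact hu
  rcases h with h | h
  · exact lext_not_sf hz h a hBm
  · exact lext_not_li hquad hz h a hBm

section Sums
variable [∀ j : ℕ, Fintype ↥(PairSet Q R j)]

lemma sumA_of_rext (hs : StringData Q R) (hquad : ∀ r ∈ R, r.length = 2)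
    {m : ℕ} (hm : 1 ≤ m) {y : Pr Q} (hy : Bm Q R m y)
    (hnsl : ¬ sharesLast Q y) (hnri : ¬ rightI Q R y.2) (u : Pr Q) :
    (∑ x : ↥(PairSet Q R (m + 1)), Hc Q R k (m + 1) u x.val *
      (if ∃ b, x.val.1 = y.1 ++ [b] ∧ x.val.2 = y.2 ++ [b] then (-1 : k) ^ (m + 1) else 0))
      = if u = y then 1 else 0 := by
  obtain ⟨xR, hBxR, hform, _, _, _, huniq⟩ := rext_class hs hquad hy hnsl hnri
  obtain ⟨b0, hb1, hb2⟩ := hform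
  have hmem : xR ∈ PairSet Q R (m + 1) := (pairSet_iff hquad (by omega)).2 hBxR
  rw [Finset.sum_eq_single_of_mem (⟨xR, hmem⟩ : ↥(PairSet Q R (m + 1)))
    (Finset.mem_univ _) ?hother]
  case hother =>
    intro x _ hne
    rw [if_neg, mul_zero]
    intro hcond
    exact hne (Subtype.ext (huniq x.val ((pairSet_iff hquad (by omega)).1 x.prop) hcond))
  rw [if_pos ⟨b0, hb1, hb2⟩, Hc_append hb1 hb2 u]
  by_cases h : u = y
  · rw [if_pos h, if_pos h, ← pow_add]
    exact Even.neg_one_pow ⟨m + 1, by ring⟩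
  · rw [if_neg h, if_neg h, zero_mul]

lemma sumA_empty (hquad : ∀ r ∈ R, r.length = 2) {m : ℕ} (hm : 1 ≤ m)
    {y : Pr Q} (hy : Bm Q R m y) (h : sharesLast Q y ∨ rightI Q R y.2) (u : Pr Q) :
    (∑ x : ↥(PairSet Q R (m + 1)), Hc Q R k (m + 1) u x.val *
      (if ∃ b, x.val.1 = y.1 ++ [b] ∧ x.val.2 = y.2 ++ [b] then (-1 : k) ^ (m + 1) else 0))
      = 0 :=
  Finset.sum_eq_zero fun x _ => by
    rw [if_neg (ind_rext_empty hquad hy ((pairSet_iff hquad (by omega)).1 x.prop) h),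
      mul_zero]

lemma sumB_of_lext (hs : StringData Q R) (hquad : ∀ r ∈ R, r.length = 2)
    {m : ℕ} (hm : 1 ≤ m) {y : Pr Q} (hy : Bm Q R m y)
    (hnsf : ¬ sharesFirst Q y) (hnli : ¬ leftI Q R y.2) (u : Pr Q) :
    ∃ xL : Pr Q, Bm Q R (m + 1) xL ∧ (∃ a, xL.1 = a :: y.1 ∧ xL.2 = a :: y.2) ∧
      (sharesLast Q xL ↔ sharesLast Q y) ∧ (rightI Q R xL.2 ↔ rightI Q R y.2) ∧
      (∑ x : ↥(PairSet Q R (m + 1)), Hc Q R k (m + 1) u x.val *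
        (if ∃ a, x.val.1 = a :: y.1 ∧ x.val.2 = a :: y.2 then (1 : k) else 0))
        = Hc Q R k (m + 1) u xL := by
  obtain ⟨xL, hBxL, hform, _, hsliff, hriiff, huniq⟩ := lext_class hs hquad hy hnsf hnli
  have hmem : xL ∈ PairSet Q R (m + 1) := (pairSet_iff hquad (by omega)).2 hBxL
  refine ⟨xL, hBxL, hform, hsliff, hriiff, ?_⟩
  rw [Finset.sum_eq_single_of_mem (⟨xL, hmem⟩ : ↥(PairSet Q R (m + 1)))
    (Finset.mem_univ _) ?hother]
  case hother =>
    intro x _ hne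
    rw [if_neg, mul_zero]
    intro hcond
    exact hne (Subtype.ext (huniq x.val ((pairSet_iff hquad (by omega)).1 x.prop) hcond))
  rw [if_pos hform, mul_one]

lemma sumB_empty (hquad : ∀ r ∈ R, r.length = 2) {m : ℕ} (hm : 1 ≤ m)
    {y : Pr Q} (hy : Bm Q R m y) (h : sharesFirst Q y ∨ leftI Q R y.2) (u : Pr Q) :
    (∑ x : ↥(PairSet Q R (m + 1)), Hc Q R k (m + 1) u x.val *
      (if ∃ a, x.val.1 = a :: y.1 ∧ x.val.2 = a :: y.2 then (1 : k) else 0)) = 0 :=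
  Finset.sum_eq_zero fun x _ => by
    rw [if_neg (ind_lext_empty hquad hy ((pairSet_iff hquad (by omega)).1 x.prop) h),
      mul_zero]

lemma sumS2_sl (hs : StringData Q R) (hquad : ∀ r ∈ R, r.length = 2)
    {m : ℕ} (hm : 2 ≤ m) {y : Pr Q} (hy : Bm Q R m y) (hsl : sharesLast Q y)
    (u : Pr Q) :
    ∃ yR : Pr Q, Bm Q R (m - 1) yR ∧ (∃ b, y.1 = yR.1 ++ [b] ∧ y.2 = yR.2 ++ [b]) ∧
      ¬ sharesLast Q yR ∧ ¬ rightI Q R yR.2 ∧ (sharesFirst Q yR ↔ sharesFirst Q y) ∧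
      (leftI Q R yR.2 ↔ leftI Q R y.2) ∧
      (∑ w : ↥(PairSet Q R (m - 1)), coeffF Q k R m w.val u * Hc Q R k m w.val y)
        = (-1 : k) ^ m * coeffF Q k R m yR u := by
  have hy' : Bm Q R ((m - 1) + 1) y := by rw [Nat.sub_add_cancel (by omega)]; exact hy
  obtain ⟨yR, hByR, hform, hnsl, hnri, hsfiff, hliiff, _⟩ :=
    strip_last_class hs hquad (by omega) hy' hsl
  obtain ⟨b0, hb1, hb2⟩ := hform
  have hmem : yR ∈ PairSet Q R (m - 1) := (pairSet_iff hquad (by omega)).2 hByR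
  refine ⟨yR, hByR, ⟨b0, hb1, hb2⟩, hnsl, hnri, hsfiff, hliiff, ?_⟩
  rw [Finset.sum_eq_single_of_mem (⟨yR, hmem⟩ : ↥(PairSet Q R (m - 1)))
    (Finset.mem_univ _) ?hother]
  case hother =>
    intro w _ hne
    rw [Hc_append hb1 hb2 w.val, if_neg, mul_zero]
    intro hcond
    exact hne (Subtype.ext hcond)
  rw [Hc_append hb1 hb2 yR, if_pos rfl, mul_comm]

lemma sumS2_sf (hs : StringData Q R) (hquad : ∀ r ∈ R, r.length = 2)
    {m : ℕ} (hm : 2 ≤ m) {y : Pr Q} (hy : Bm Q R m y) (hnsl : ¬ sharesLast Q y)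
    (hri : rightI Q R y.2) (hsf : sharesFirst Q y) (u : Pr Q) :
    ∃ yL : Pr Q, Bm Q R (m - 1) yL ∧ (∃ a, y.1 = a :: yL.1 ∧ y.2 = a :: yL.2) ∧
      ¬ sharesFirst Q yL ∧ ¬ leftI Q R yL.2 ∧ (sharesLast Q yL ↔ sharesLast Q y) ∧
      (rightI Q R yL.2 ↔ rightI Q R y.2) ∧
      (∑ w : ↥(PairSet Q R (m - 1)), coeffF Q k R m w.val u * Hc Q R k m w.val y)
        = coeffF Q k R m yL u := by
  have hy' : Bm Q R ((m - 1) + 1) y := by rw [Nat.sub_add_cancel (by omega)]; exact hy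
  obtain ⟨yL, hByL, hform, hnsf, hnli, hsliff, hriiff, _⟩ :=
    strip_first_class hs hquad (by omega) hy' hsf
  obtain ⟨a0, ha1, ha2⟩ := hform
  have hmem : yL ∈ PairSet Q R (m - 1) := (pairSet_iff hquad (by omega)).2 hByL
  refine ⟨yL, hByL, ⟨a0, ha1, ha2⟩, hnsf, hnli, hsliff, hriiff, ?_⟩
  rw [Finset.sum_eq_single_of_mem (⟨yL, hmem⟩ : ↥(PairSet Q R (m - 1)))
    (Finset.mem_univ _) ?hother]
  case hother =>
    intro w _ hne
    rw [Hc_cons ha1 ha2 hnsl w.val, if_neg, mul_zero]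
    rintro ⟨_, hcond⟩
    exact hne (Subtype.ext hcond)
  rw [Hc_cons ha1 ha2 hnsl yL, if_pos ⟨hri, rfl⟩, mul_one]

lemma sumS2_zero {m : ℕ} {y : Pr Q} (hnsl : ¬ sharesLast Q y)
    (h2 : ¬ sharesFirst Q y ∨ ¬ rightI Q R y.2) (u : Pr Q) :
    (∑ w : ↥(PairSet Q R (m - 1)), coeffF Q k R m w.val u * Hc Q R k m w.val y)
      = 0 :=
  Finset.sum_eq_zero fun w _ => by
    rcases h2 with h2 | h2
    · rw [Hc_zero_nsl_nsf hnsl h2 w.val, mul_zero]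
    · rw [Hc_zero_nsl_nri hnsl h2 w.val, mul_zero]

end Sums

section Key
variable [∀ j : ℕ, Fintype ↥(PairSet Q R j)]

lemma key_identity (hs : StringData Q R) (hquad : ∀ r ∈ R, r.length = 2)
    {m : ℕ} (hm : 2 ≤ m) (u y : ↥(PairSet Q R m)) :
    (∑ x : ↥(PairSet Q R (m + 1)),
        Hc Q R k (m + 1) u.val x.val * coeffF Q k R (m + 1) y.val x.val) +
      (∑ w : ↥(PairSet Q R (m - 1)),
        coeffF Q k R m w.val u.val * Hc Q R k m w.val y.val) =
      (if u = y then
        (if ¬ sharesFirst Q y.val ∧ ¬ sharesLast Q y.val ∧ leftI Q R y.val.2 ∧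
            rightI Q R y.val.2 then (0 : k) else 1) else 0) := by
  have hBy : Bm Q R m y.val := (pairSet_iff hquad (by omega)).1 y.prop
  have hBu : Bm Q R m u.val := (pairSet_iff hquad (by omega)).1 u.prop
  have hBu' : Bm Q R ((m - 1) + 1) u.val := by
    rw [Nat.sub_add_cancel (by omega)]; exact hBu
  have hBy' : Bm Q R ((m - 1) + 1) y.val := by
    rw [Nat.sub_add_cancel (by omega)]; exact hBy
  have hS1 : ∀ x : ↥(PairSet Q R (m + 1)),
      coeffF Q k R (m + 1) y.val x.val =
        (if ∃ b, x.val.1 = y.val.1 ++ [b] ∧ x.val.2 = y.val.2 ++ [b]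
          then (-1 : k) ^ (m + 1) else 0) +
        (if ∃ a, x.val.1 = a :: y.val.1 ∧ x.val.2 = a :: y.val.2 then (1 : k) else 0) :=
    fun x => coeff_eval hquad (by omega)
      ((pairSet_iff hquad (by omega)).1 x.prop).2.1
      (by have := hBy.2.1; omega)
  simp_rw [hS1, mul_add, Finset.sum_add_distrib]
  by_cases hsl : sharesLast Q y.val
  · -- CASE: shares last arrow
    obtain ⟨yR, hByR, hformR, hnslR, hnriR, hsfiff, hliiff, hsum2⟩ :=
      sumS2_sl (k := k) hs hquad hm hBy hsl u.val
    obtain ⟨b0, hb1, hb2⟩ := hformR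
    rw [sumA_empty hquad (by omega) hBy (Or.inl hsl), hsum2]
    have hcoeff : coeffF Q k R m yR u.val =
        (if ∃ b, u.val.1 = yR.1 ++ [b] ∧ u.val.2 = yR.2 ++ [b]
          then (-1 : k) ^ m else 0) +
        (if ∃ a, u.val.1 = a :: yR.1 ∧ u.val.2 = a :: yR.2 then (1 : k) else 0) :=
      coeff_eval hquad hm hBu.2.1 hByR.2.1
    have hrind : (∃ b, u.val.1 = yR.1 ++ [b] ∧ u.val.2 = yR.2 ++ [b]) ↔
        u.val = y.val :=
      ind_rext_eq hs hByR hBu' hBy' ⟨b0, hb1, hb2⟩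
    have e1 : (if ∃ b, u.val.1 = yR.1 ++ [b] ∧ u.val.2 = yR.2 ++ [b]
        then (-1 : k) ^ m else 0) = (if u = y then (-1 : k) ^ m else 0) := by
      by_cases h : u = y
      · rw [if_pos (hrind.2 (by rw [h])), if_pos h]
      · rw [if_neg (fun hc => h (Subtype.ext (hrind.1 hc))), if_neg h]
    have hmmf : ¬(¬ sharesFirst Q y.val ∧ ¬ sharesLast Q y.val ∧
        leftI Q R y.val.2 ∧ rightI Q R y.val.2) := fun hc => hc.2.1 hsl
    rw [hcoeff, e1, if_neg hmmf]
    by_cases hB : ¬ sharesFirst Q y.val ∧ ¬ leftI Q R y.val.2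
    · obtain ⟨xL, hBxL, hformL, hsliff2, hriiff2, hsumB⟩ :=
        sumB_of_lext (k := k) hs hquad (by omega) hBy hB.1 hB.2 u.val
      obtain ⟨a0, ha1, ha2⟩ := hformL
      have hz1 : xL.1 = (a0 :: yR.1) ++ [b0] := by rw [ha1, hb1]; rfl
      have hz2 : xL.2 = (a0 :: yR.2) ++ [b0] := by rw [ha2, hb2]; rfl
      have hslxL : sharesLast Q xL := hsliff2.2 hsl
      obtain ⟨z', hBz', hformz', _, _, _, _, huniqz⟩ :=
        strip_last_class hs hquad (by omega) hBxL hslxL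
      have hzz : ((a0 :: yR.1, a0 :: yR.2) : Pr Q) = z' :=
        huniqz _ ⟨b0, hz1, hz2⟩
      have hBz : Bm Q R ((m - 1) + 1) ((a0 :: yR.1, a0 :: yR.2) : Pr Q) := by
        rw [Nat.sub_add_cancel (by omega), hzz]; exact hBz'
      have hcind : (∃ a, u.val.1 = a :: yR.1 ∧ u.val.2 = a :: yR.2) ↔
          u.val = (a0 :: yR.1, a0 :: yR.2) :=
        ind_lext_eq hs hByR hBu' hBz ⟨a0, rfl, rfl⟩
      have e2 : (if ∃ a, u.val.1 = a :: yR.1 ∧ u.val.2 = a :: yR.2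
          then (1 : k) else 0) =
          (if u.val = (a0 :: yR.1, a0 :: yR.2) then (1 : k) else 0) := by
        by_cases h : u.val = (a0 :: yR.1, a0 :: yR.2)
        · rw [if_pos (hcind.2 h), if_pos h]
        · rw [if_neg (fun hc => h (hcind.1 hc)), if_neg h]
      have hHcxL : Hc Q R k (m + 1) u.val xL =
          if u.val = (a0 :: yR.1, a0 :: yR.2) then (-1 : k) ^ (m + 1) else 0 :=
        Hc_append hz1 hz2 u.val
      rw [hsumB, hHcxL, e2]
      have hyz : y.val ≠ ((a0 :: yR.1, a0 :: yR.2) : Pr Q) := fun h =>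
        hB.1 (by rw [h]; exact sf_of_cons_form rfl rfl)
      by_cases h1 : u = y
      · have h2' : u.val ≠ ((a0 :: yR.1, a0 :: yR.2) : Pr Q) := by
          rw [h1]; exact hyz
        rw [if_pos h1, if_neg h2', if_neg h2', if_pos h1]
        simp only [zero_add, add_zero, mul_zero, mul_one]
        rw [← pow_add]
        exact Even.neg_one_pow ⟨m, by ring⟩
      · rw [if_neg h1, if_neg h1]
        by_cases h2 : u.val = ((a0 :: yR.1, a0 :: yR.2) : Pr Q)
        · rw [if_pos h2, if_pos h2]
          simp only [zero_add, add_zero, mul_zero, mul_one]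
          rw [pow_succ]
          ring
        · rw [if_neg h2, if_neg h2]
          simp
    · have hBor : sharesFirst Q y.val ∨ leftI Q R y.val.2 := by tauto
      have hBoryR : sharesFirst Q yR ∨ leftI Q R yR.2 := by
        rcases hBor with h | h
        · exact Or.inl (hsfiff.2 h)
        · exact Or.inr (hliiff.2 h)
      rw [sumB_empty hquad (by omega) hBy hBor,
        if_neg (ind_lext_empty hquad hByR hBu' hBoryR)]
      by_cases h1 : u = y
      · rw [if_pos h1, if_pos h1]
        simp only [zero_add, add_zero, mul_zero, mul_one]
        rw [← pow_add]
        exact Even.neg_one_pow ⟨m, by ring⟩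
      · rw [if_neg h1, if_neg h1]
        simp
  · -- CASE: does not share last arrow
    by_cases hsf : sharesFirst Q y.val
    · by_cases hri : rightI Q R y.val.2
      · -- ¬sL, sF, rI
        obtain ⟨yL, hByL, hformL, hnsfL, hnliL, hsliff, hriiff, hsum2⟩ :=
          sumS2_sf (k := k) hs hquad hm hBy hsl hri hsf u.val
        obtain ⟨a0, ha1, ha2⟩ := hformL
        rw [sumA_empty hquad (by omega) hBy (Or.inr hri),
          sumB_empty hquad (by omega) hBy (Or.inl hsf), hsum2]
        have hcoeff : coeffF Q k R m yL u.val =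
            (if ∃ b, u.val.1 = yL.1 ++ [b] ∧ u.val.2 = yL.2 ++ [b]
              then (-1 : k) ^ m else 0) +
            (if ∃ a, u.val.1 = a :: yL.1 ∧ u.val.2 = a :: yL.2 then (1 : k) else 0) :=
          coeff_eval hquad hm hBu.2.1 hByL.2.1
        have hcind : (∃ a, u.val.1 = a :: yL.1 ∧ u.val.2 = a :: yL.2) ↔
            u.val = y.val :=
          ind_lext_eq hs hByL hBu' hBy' ⟨a0, ha1, ha2⟩
        rw [hcoeff,
          if_neg (ind_rext_empty hquad hByL hBu' (Or.inr (hriiff.2 hri))),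
          if_neg (fun hc : ¬ sharesFirst Q y.val ∧ _ => hc.1 hsf)]
        by_cases h1 : u = y
        · rw [if_pos (hcind.2 (by rw [h1])), if_pos h1]
          simp
        · rw [if_neg (fun hc => h1 (Subtype.ext (hcind.1 hc))), if_neg h1]
          simp
      · -- ¬sL, sF, ¬rI
        rw [sumA_of_rext hs hquad (by omega) hBy hsl hri u.val,
          sumB_empty hquad (by omega) hBy (Or.inl hsf),
          sumS2_zero (k := k) hsl (Or.inr hri) u.val,
          if_neg (fun hc : ¬ sharesFirst Q y.val ∧ _ => hc.1 hsf)]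
        by_cases h1 : u = y
        · rw [if_pos (show u.val = y.val by rw [h1]), if_pos h1]
          simp
        · rw [if_neg (fun hc => h1 (Subtype.ext hc)), if_neg h1]
          simp
    · rw [sumS2_zero (k := k) hsl (Or.inl hsf) u.val]
      by_cases hri : rightI Q R y.val.2 <;> by_cases hli : leftI Q R y.val.2
      · -- rI, lI : isolated
        rw [sumA_empty hquad (by omega) hBy (Or.inr hri),
          sumB_empty hquad (by omega) hBy (Or.inr hli),
          if_pos (show ¬ sharesFirst Q y.val ∧ ¬ sharesLast Q y.val ∧
            leftI Q R y.val.2 ∧ rightI Q R y.val.2 from ⟨hsf, hsl, hli, hri⟩)]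
        simp
      · -- rI, ¬lI
        obtain ⟨xL, hBxL, hformL, hsliff2, hriiff2, hsumB⟩ :=
          sumB_of_lext (k := k) hs hquad (by omega) hBy hsf hli u.val
        obtain ⟨a0, ha1, ha2⟩ := hformL
        have hnslxL : ¬ sharesLast Q xL := fun h => hsl (hsliff2.1 h)
        rw [sumA_empty hquad (by omega) hBy (Or.inr hri), hsumB,
          Hc_cons ha1 ha2 hnslxL u.val,
          if_neg (fun hc : ¬ sharesFirst Q y.val ∧ _ => hli hc.2.2.1)]
        by_cases h1 : u = y
        · rw [if_pos ⟨hriiff2.2 hri, show u.val = y.val by rw [h1]⟩, if_pos h1]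
          simp
        · rw [if_neg (fun hc => h1 (Subtype.ext hc.2)), if_neg h1]
          simp
      · -- ¬rI, lI
        rw [sumA_of_rext hs hquad (by omega) hBy hsl hri u.val,
          sumB_empty hquad (by omega) hBy (Or.inr hli),
          if_neg (fun hc : ¬ sharesFirst Q y.val ∧ _ => hri hc.2.2.2)]
        by_cases h1 : u = y
        · rw [if_pos (show u.val = y.val by rw [h1]), if_pos h1]
          simp
        · rw [if_neg (fun hc => h1 (Subtype.ext hc)), if_neg h1]
          simp
      · -- ¬rI, ¬lI
        obtain ⟨xL, hBxL, hformL, hsliff2, hriiff2, hsumB⟩ :=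
          sumB_of_lext (k := k) hs hquad (by omega) hBy hsf hli u.val
        have hnslxL : ¬ sharesLast Q xL := fun h => hsl (hsliff2.1 h)
        have hnrixL : ¬ rightI Q R xL.2 := fun h => hri (hriiff2.1 h)
        rw [sumA_of_rext hs hquad (by omega) hBy hsl hri u.val, hsumB,
          Hc_zero_nsl_nri hnslxL hnrixL u.val,
          if_neg (fun hc : ¬ sharesFirst Q y.val ∧ _ => hri hc.2.2.2)]
        by_cases h1 : u = y
        · rw [if_pos (show u.val = y.val by rw [h1]), if_pos h1]
          simp
        · rw [if_neg (fun hc => h1 (Subtype.ext hc)), if_neg h1]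
          simp

end Key

lemma coeff_row_zero (hquad : ∀ r ∈ R, r.length = 2) {m : ℕ} (hm : 2 ≤ m)
    {v y : Pr Q} (hv : Bm Q R m v) (hy : Bm Q R (m - 1) y)
    (hnsf : ¬ sharesFirst Q v) (hnsl : ¬ sharesLast Q v) :
    coeffF Q k R m y v = 0 := by
  rw [coeff_eval hquad hm hv.2.1 hy.2.1, if_neg, if_neg, add_zero]
  · rintro ⟨a, ha1, ha2⟩
    exact hnsf (sf_of_cons_form ha1 ha2)
  · rintro ⟨b, hb1, hb2⟩
    exact hnsl (sl_of_append_form hb1 hb2)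

lemma coeff_col_zero (hquad : ∀ r ∈ R, r.length = 2) {m : ℕ} (hm : 1 ≤ m)
    {v x : Pr Q} (hv : Bm Q R m v) (hx : Bm Q R (m + 1) x)
    (hli : leftI Q R v.2) (hri : rightI Q R v.2) :
    coeffF Q k R (m + 1) v x = 0 := by
  rw [coeff_eval hquad (by omega) hx.2.1
      (show v.1.length = m + 1 - 1 by have := hv.2.1; omega),
    if_neg (ind_rext_empty hquad hv hx (Or.inr hri)),
    if_neg (ind_lext_empty hquad hv hx (Or.inr hli)), add_zero]

end Coeff

section Master
variable {Q : QuivData} {R : Set (List Q.E)}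

lemma finrank_HHn (hs : StringData Q R) (hquad : ∀ r ∈ R, r.length = 2)
    (k : Type) [Field k] [∀ j : ℕ, Fintype ↥(PairSet Q R j)] {n : ℕ} (hn : 2 ≤ n) :
    Module.finrank k (HHn Q k R n) = (mm00 Q R n).ncard := by
  classical
  let P : ↥(PairSet Q R n) → Prop := fun v =>
    ¬ sharesFirst Q v.val ∧ ¬ sharesLast Q v.val ∧ leftI Q R v.val.2 ∧
      rightI Q R v.val.2
  have hBm : ∀ (j : ℕ), 1 ≤ j → ∀ v : ↥(PairSet Q R j), Bm Q R j v.val :=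
    fun j hj v => (pairSet_iff hquad hj).1 v.prop
  have apply_F : ∀ (z : ↥(PairSet Q R (n - 1)) → k) (x : ↥(PairSet Q R n)),
      F Q k R n z x = ∑ w : ↥(PairSet Q R (n - 1)), coeffF Q k R n w.val x.val * z w :=
    fun z x => rfl
  have apply_F1 : ∀ (z : ↥(PairSet Q R n) → k) (x : ↥(PairSet Q R (n + 1))),
      F Q k R (n + 1) z x =
        ∑ w : ↥(PairSet Q R n), coeffF Q k R (n + 1) w.val x.val * z w :=
    fun z x => rfl
  -- the key vector identity
  have hvec : ∀ (z : ↥(PairSet Q R n) → k) (u : ↥(PairSet Q R n)),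
      (∑ x : ↥(PairSet Q R (n + 1)),
          Hc Q R k (n + 1) u.val x.val * F Q k R (n + 1) z x) +
        F Q k R n (fun w : ↥(PairSet Q R (n - 1)) =>
          ∑ yy : ↥(PairSet Q R n), Hc Q R k n w.val yy.val * z yy) u =
      z u - (if P u then z u else 0) := by
    intro z u
    rw [apply_F]
    simp_rw [apply_F1 z]
    have e1 : (∑ x : ↥(PairSet Q R (n + 1)), Hc Q R k (n + 1) u.val x.val *
        ∑ yy : ↥(PairSet Q R n), coeffF Q k R (n + 1) yy.val x.val * z yy)
        = ∑ yy : ↥(PairSet Q R n), (∑ x : ↥(PairSet Q R (n + 1)),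
            Hc Q R k (n + 1) u.val x.val * coeffF Q k R (n + 1) yy.val x.val) * z yy := by
      simp_rw [Finset.mul_sum, Finset.sum_mul]
      rw [Finset.sum_comm]
      simp_rw [mul_assoc]
    have e2 : (∑ w : ↥(PairSet Q R (n - 1)), coeffF Q k R n w.val u.val *
        ∑ yy : ↥(PairSet Q R n), Hc Q R k n w.val yy.val * z yy)
        = ∑ yy : ↥(PairSet Q R n), (∑ w : ↥(PairSet Q R (n - 1)),
            coeffF Q k R n w.val u.val * Hc Q R k n w.val yy.val) * z yy := by
      simp_rw [Finset.mul_sum, Finset.sum_mul]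
      rw [Finset.sum_comm]
      simp_rw [mul_assoc]
    rw [e1, e2, ← Finset.sum_add_distrib]
    simp_rw [← add_mul]
    rw [Finset.sum_congr rfl (fun yy _ => by rw [key_identity hs hquad hn u yy])]
    rw [Finset.sum_eq_single_of_mem u (Finset.mem_univ _)
      (fun yy _ hne => by rw [if_neg (fun h => hne (h.symm)), zero_mul])]
    by_cases hP : P u
    · rw [if_pos rfl, if_pos hP, if_pos hP, zero_mul, sub_self]
    · rw [if_pos rfl, if_neg hP, if_neg hP, one_mul, sub_zero]
  -- the comparison map
  let T := {v : ↥(PairSet Q R n) // P v}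
  let φ : ↥(LinearMap.ker (F Q k R (n + 1))) →ₗ[k] (T → k) :=
    (LinearMap.funLeft k k (fun t : T => t.val)).comp
      (LinearMap.ker (F Q k R (n + 1))).subtype
  have hφ_apply : ∀ (x : ↥(LinearMap.ker (F Q k R (n + 1)))) (t : T),
      φ x t = x.val t.val := fun x t => rfl
  have hsurj : Function.Surjective φ := by
    intro g
    have hzmem : (fun u : ↥(PairSet Q R n) =>
        if h : P u then g ⟨u, h⟩ else 0) ∈ LinearMap.ker (F Q k R (n + 1)) := by
      rw [LinearMap.mem_ker]
      funext x
      rw [Pi.zero_apply]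
      refine (apply_F1 _ x).trans (Finset.sum_eq_zero fun yy _ => ?_)
      by_cases h : P yy
      · rw [coeff_col_zero hquad (by omega) (hBm n (by omega) yy)
          ((pairSet_iff hquad (by omega)).1 x.prop) h.2.2.1 h.2.2.2, zero_mul]
      · rw [dif_neg h, mul_zero]
    refine ⟨⟨_, hzmem⟩, ?_⟩
    funext t
    rw [hφ_apply]
    show (if h : P t.val then g ⟨t.val, h⟩ else 0) = g t
    rw [dif_pos t.prop]
  have hker : LinearMap.ker φ =
      Submodule.comap (LinearMap.ker (F Q k R (n + 1))).subtype
        (LinearMap.range (F Q k R n)) := by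
    ext x
    rw [LinearMap.mem_ker, Submodule.mem_comap]
    constructor
    · intro hx
      have hx0 : ∀ t : T, x.val t.val = 0 := fun t => by
        rw [← hφ_apply x t, hx]; rfl
      have hmem : x.val ∈ LinearMap.range (F Q k R n) := by
        rw [LinearMap.mem_range]
        refine ⟨fun w : ↥(PairSet Q R (n - 1)) =>
          ∑ yy : ↥(PairSet Q R n), Hc Q R k n w.val yy.val * x.val yy, ?_⟩
        funext u
        have hkey := hvec x.val u
        have hker_x : F Q k R (n + 1) x.val = 0 := LinearMap.mem_ker.1 x.prop
        rw [hker_x] at hkey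
        simp only [Pi.zero_apply, mul_zero, Finset.sum_const_zero, zero_add] at hkey
        refine hkey.trans ?_
        by_cases hP : P u
        · have h0 : x.val u = 0 := hx0 ⟨u, hP⟩
          rw [h0, if_pos hP]
          simp
        · rw [if_neg hP, sub_zero]
      exact hmem
    · intro hx
      have hx' : x.val ∈ LinearMap.range (F Q k R n) := hx
      rw [LinearMap.mem_range] at hx'
      obtain ⟨w, hw⟩ := hx'
      funext t
      rw [Pi.zero_apply, hφ_apply]
      have h2 : F Q k R n w t.val = x.val t.val := congrFun hw t.val
      rw [← h2, apply_F]
      refine Finset.sum_eq_zero fun yy _ => ?_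
      rw [coeff_row_zero hquad hn (hBm n (by omega) t.val)
        (hBm (n - 1) (by omega) yy) t.prop.1 t.prop.2.1, zero_mul]
  -- conclude via the quotient equivalences
  have equiv1 : HHn Q k R n ≃ₗ[k] (T → k) :=
    (Submodule.quotEquivOfEq _ _ hker.symm).trans
      (φ.quotKerEquivOfSurjective hsurj)
  rw [LinearEquiv.finrank_eq equiv1, Module.finrank_pi k]
  have hmm_iff : ∀ v : ↥(PairSet Q R n), P v ↔ v.val ∈ mm00 Q R n := by
    intro v
    constructor
    · rintro ⟨h1, h2, h3, h4⟩
      exact ⟨⟨v.prop, h1, h2⟩, h3, h4⟩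
    · rintro ⟨⟨_, h1, h2⟩, h3, h4⟩
      exact ⟨h1, h2, h3, h4⟩
  have hsub : mm00 Q R n ⊆ PairSet Q R n := fun x hx => hx.1.1
  have eqv : T ≃ ↥(mm00 Q R n) :=
    { toFun := fun t => ⟨t.val.val, (hmm_iff t.val).1 t.prop⟩
      invFun := fun e => ⟨⟨e.val, hsub e.prop⟩, (hmm_iff ⟨e.val, hsub e.prop⟩).2 e.prop⟩
      left_inv := fun t => by
        apply Subtype.ext
        apply Subtype.ext
        rfl
      right_inv := fun e => rfl }
  rw [← Nat.card_coe_set_eq, ← Nat.card_eq_fintype_card, Nat.card_congr eqv]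

end Master

/-- **Corollary (quadratic case) / Statement 11.** If `A = kQ/I` is a
triangular string algebra all of whose relations are quadratic (e.g. a gentle
triangular algebra), then `⁺⁻(0,1)_n = ∅` for `n ≥ 2`, and hence
`dim_k HH^n(A) = |⁻(0,0)⁻_n|` for all `n ≥ 2`. -/
theorem statement11 (Q : QuivData) (R : Set (List Q.E)) (hs : StringData Q R)
    (hquad : ∀ r ∈ R, r.length = 2)
    (k : Type) [Field k] [Fintype Q.V] [∀ j, Fintype ↥(PairSet Q R j)] :
    ∀ n, 2 ≤ n → pm01 Q R n = ∅ ∧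
      Module.finrank k (HHn Q k R n) = (mm00 Q R n).ncard := by
  intro n hn
  exact ⟨pm01_empty hs hquad hn, finrank_HHn hs hquad k hn⟩


end Paper
end
end

section
/- If n is even and w ∈ AP_{n+m} factors as w = w' u w'' with w' ∈ AP_n, w'' ∈ AP_m, then the only ψ ∈ AP_n with L(ψ)ψR(ψ) = w'u is ψ = w' itself (taking R(ψ) = u); that is, the lifting map satisfies f_n(1⊗w⊗1) = 1 ⊗ w' ⊗ u·f̂(w''). -/
/-!
Common framework for formalizing "Hochschild cohomology of triangular string
algebras and its ring structure" (Redondo–Román).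

* Interval combinatorics model of Bardzell's `n`-concatenations along a directed
  path (a directed path is modelled by the line `ℕ`, a subpath by an interval,
  and a relation by the interval it occupies).
* A combinatorial model of a bound quiver `(Q, I)` with `I` a monomial ideal
  generated by a reduced set `R` of paths: paths are nonempty composable lists
  of arrows, `AP_n` is the set of supports of `n`-concatenations, `𝒫` is the
  basis of `A = kQ/I` given by the paths not in `I`.
* The Hochschild complex `Hom_{E-E}(kAP_n, A) ≅ k(AP_n ∥ 𝒫)` of a (triangular)
  monomial algebra obtained from Bardzell's minimal resolution, with its
  differentials `F_n` realized as explicit matrices, and the Hochschild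
  cohomology `HH^n(A)` defined as the cohomology of this complex (for monomial
  algebras this complex computes Hochschild cohomology, by Bardzell's theorem).
-/

attribute [local instance] Classical.propDecidable

noncomputable section

namespace Paper

variable (Q : QuivData)

/-! ### The Hochschild complex obtained from Bardzell's resolution -/

variable (k : Type) [Field k]

/-! ### Auxiliary lemmas for Statement 17 -/

section Stmt17Aux

variable {R : Set Iv}

/-- In a reduced set, sources and targets are ordered compatibly. -/
lemma src_le_iff (hR : RelSet R) {r s : Iv} (hr : r ∈ R) (hs : s ∈ R) :
    r.1 ≤ s.1 ↔ r.2 ≤ s.2 := by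
  constructor
  · intro h
    by_contra h2
    push_neg at h2
    have he := hR.nodiv r hr s hs h h2.le
    rw [he] at h2
    exact absurd h2 (lt_irrefl _)
  · intro h
    by_contra h2
    push_neg at h2
    have he := hR.nodiv s hs r hr h2.le h
    rw [he] at h2
    exact absurd h2 (lt_irrefl _)

lemma src_lt (hR : RelSet R) {r s : Iv} (hr : r ∈ R) (hs : s ∈ R)
    (h : r.2 < s.2) : r.1 < s.1 := by
  by_contra h2
  push_neg at h2
  have := (src_le_iff hR hs hr).1 h2
  omega

lemma src_eq (hR : RelSet R) {r s : Iv} (hr : r ∈ R) (hs : s ∈ R)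
    (h : r.1 = s.1) : r = s :=
  hR.nodiv r hr s hs h.le ((src_le_iff hR hs hr).1 h.ge)

lemma tgt_eq (hR : RelSet R) {r s : Iv} (hr : r ∈ R) (hs : s ∈ R)
    (h : r.2 = s.2) : r = s :=
  hR.nodiv r hr s hs ((src_le_iff hR hr hs).2 h.le) h.ge

lemma concat_mem {K : ℕ} {p : ℕ → Iv} (hp : IsConcat R K p) {i : ℕ}
    (hi : i < K) : p i ∈ R := by
  rcases i with _ | j
  · exact hp.1
  · have h := (hp.2 (j + 1) (by omega) hi).1
    unfold cWindow at h
    split at h <;> exact h.1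

lemma opconcat_mem {K : ℕ} {q : ℕ → Iv} (hq : IsOpConcat R K q) {i : ℕ}
    (hi : i < K) : q i ∈ R := by
  rcases i with _ | j
  · exact hq.1
  · have h := (hq.2 (j + 1) (by omega) hi).1
    unfold oWindow at h
    split at h <;> exact h.1

lemma concat_one {K : ℕ} {p : ℕ → Iv} (hp : IsConcat R K p) (h : 1 < K) :
    (p 0).1 < (p 1).1 ∧ (p 1).1 < (p 0).2 ∧
      ∀ x, x ∈ R → (p 0).1 < x.1 → x.1 < (p 0).2 → (p 1).1 ≤ x.1 := by
  obtain ⟨hmem, hmin⟩ := hp.2 1 le_rfl h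
  unfold cWindow at hmem hmin
  rw [if_pos rfl] at hmem hmin
  simp only [Set.mem_setOf_eq] at hmem hmin
  exact ⟨hmem.2.1, hmem.2.2, fun x hx h1 h2 => hmin x ⟨hx, h1, h2⟩⟩

lemma concat_step {K : ℕ} {p : ℕ → Iv} (hp : IsConcat R K p) {j : ℕ}
    (h : j + 2 < K) :
    (p j).2 ≤ (p (j + 2)).1 ∧ (p (j + 2)).1 < (p (j + 1)).2 ∧
      ∀ x, x ∈ R → (p j).2 ≤ x.1 → x.1 < (p (j + 1)).2 → (p (j + 2)).1 ≤ x.1 := by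
  obtain ⟨hmem, hmin⟩ := hp.2 (j + 2) (by omega) h
  unfold cWindow at hmem hmin
  rw [if_neg (by omega : ¬ j + 2 = 1)] at hmem hmin
  rw [show j + 2 - 2 = j from by omega, show j + 2 - 1 = j + 1 from by omega]
    at hmem hmin
  simp only [Set.mem_setOf_eq] at hmem hmin
  exact ⟨hmem.2.1, hmem.2.2, fun x hx h1 h2 => hmin x ⟨hx, h1, h2⟩⟩

lemma opconcat_one {K : ℕ} {q : ℕ → Iv} (hq : IsOpConcat R K q) (h : 1 < K) :
    (q 0).1 < (q 1).2 ∧ (q 1).2 < (q 0).2 ∧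
      ∀ x, x ∈ R → (q 0).1 < x.2 → x.2 < (q 0).2 → x.2 ≤ (q 1).2 := by
  obtain ⟨hmem, hmin⟩ := hq.2 1 le_rfl h
  unfold oWindow at hmem hmin
  rw [if_pos rfl] at hmem hmin
  simp only [Set.mem_setOf_eq] at hmem hmin
  exact ⟨hmem.2.1, hmem.2.2, fun x hx h1 h2 => hmin x ⟨hx, h1, h2⟩⟩

lemma opconcat_step {K : ℕ} {q : ℕ → Iv} (hq : IsOpConcat R K q) {j : ℕ}
    (h : j + 2 < K) :
    (q (j + 1)).1 < (q (j + 2)).2 ∧ (q (j + 2)).2 ≤ (q j).1 ∧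
      ∀ x, x ∈ R → (q (j + 1)).1 < x.2 → x.2 ≤ (q j).1 → x.2 ≤ (q (j + 2)).2 := by
  obtain ⟨hmem, hmin⟩ := hq.2 (j + 2) (by omega) h
  unfold oWindow at hmem hmin
  rw [if_neg (by omega : ¬ j + 2 = 1)] at hmem hmin
  rw [show j + 2 - 2 = j from by omega, show j + 2 - 1 = j + 1 from by omega]
    at hmem hmin
  simp only [Set.mem_setOf_eq] at hmem hmin
  exact ⟨hmem.2.1, hmem.2.2, fun x hx h1 h2 => hmin x ⟨hx, h1, h2⟩⟩

/-- Uniqueness of concatenations: a concatenation is determined by its first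
relation (greediness). -/
lemma concat_unique (hR : RelSet R) {K K' : ℕ} {p q : ℕ → Iv}
    (hp : IsConcat R K p) (hq : IsConcat R K' q) (hK : K' ≤ K)
    (h0 : (p 0).1 = (q 0).1) : ∀ i, i < K' → p i = q i := by
  intro i
  induction i using Nat.strong_induction_on with
  | _ i IH =>
  intro hi
  rcases i with _ | (_ | j)
  · exact src_eq hR hp.1 hq.1 h0
  · have e0 : p 0 = q 0 := src_eq hR hp.1 hq.1 h0
    have a := concat_one hp (by omega)
    have b := concat_one hq (by omega)
    refine src_eq hR (concat_mem hp (by omega)) (concat_mem hq (by omega))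
      (le_antisymm ?_ ?_)
    · exact a.2.2 (q 1) (concat_mem hq (by omega)) (by rw [e0]; exact b.1)
        (by rw [e0]; exact b.2.1)
    · exact b.2.2 (p 1) (concat_mem hp (by omega)) (by rw [← e0]; exact a.1)
        (by rw [← e0]; exact a.2.1)
  · have ej : p j = q j := IH j (by omega) (by omega)
    have ej1 : p (j + 1) = q (j + 1) := IH (j + 1) (by omega) (by omega)
    have a := concat_step hp (show j + 2 < K by omega)
    have b := concat_step hq (show j + 2 < K' by omega)
    refine src_eq hR (concat_mem hp (by omega)) (concat_mem hq (by omega))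
      (le_antisymm ?_ ?_)
    · exact a.2.2 (q (j + 2)) (concat_mem hq (by omega)) (by rw [ej]; exact b.1)
        (by rw [ej1]; exact b.2.1)
    · exact b.2.2 (p (j + 2)) (concat_mem hp (by omega)) (by rw [← ej]; exact a.1)
        (by rw [← ej1]; exact a.2.1)

/-- The shifting lemma: a concatenation whose first relation starts at or after
`p 1` stays (at even indices) at least one step ahead of `p`. -/
lemma shiftLem (hR : RelSet R) {K K' : ℕ} {p q : ℕ → Iv}
    (hp : IsConcat R K p) (hq : IsConcat R K' q) (hK : K' + 1 ≤ K)
    (h0 : (p 1).1 ≤ (q 0).1) :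
    ∀ r : ℕ, 2 * r < K' → (p (2 * r + 1)).1 ≤ (q (2 * r)).1 := by
  intro r
  induction r with
  | zero => intro _; exact h0
  | succ r IH =>
    intro hi
    rw [show 2 * (r + 1) = 2 * r + 2 from by omega]
    have hj : (p (2 * r + 1)).1 ≤ (q (2 * r)).1 := IH (by omega)
    have hj2 : (p (2 * r + 1)).2 ≤ (q (2 * r)).2 :=
      (src_le_iff hR (concat_mem hp (by omega)) (concat_mem hq (by omega))).1 hj
    obtain ⟨hqs1, hqs2, hqsmin⟩ := concat_step hq (show 2 * r + 2 < K' by omega)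
    obtain ⟨hps1, hps2, hpsmin⟩ := concat_step hp (show 2 * r + 1 + 2 < K by omega)
    simp only [show 2 * r + 1 + 2 = 2 * r + 3 from by omega,
        show 2 * r + 1 + 1 = 2 * r + 2 from by omega] at hps1 hps2 hpsmin
    rw [show 2 * r + 2 + 1 = 2 * r + 3 from by omega]
    by_cases hcase : (q (2 * r + 2)).1 < (p (2 * r + 2)).2
    · exact hpsmin _ (concat_mem hq (by omega)) (by omega) hcase
    · omega

/-- A single step of the "op-chain stays to the right" argument. -/
lemma opJ_step (hR : RelSet R) {K : ℕ} {p : ℕ → Iv} (hp : IsConcat R K p)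
    (n' t : ℕ) (hKt : n' + 3 + t < K) (x : Iv) (hx : x ∈ R)
    (hub : x.2 < (p (n' + 3 + t)).2) : x.1 < (p (n' + 1 + t)).2 := by
  by_cases hA : x.2 ≤ (p (n' + 2 + t)).2
  · have h1 : x.1 ≤ (p (n' + 2 + t)).1 :=
      (src_le_iff hR hx (concat_mem hp (by omega))).2 hA
    have h2 := (concat_step hp (show n' + t + 2 < K by omega)).2.1
    simp only [show n' + t + 2 = n' + 2 + t from by omega,
        show n' + t + 1 = n' + 1 + t from by omega] at h2
    omega
  · push_neg at hA
    have hs1 : (p (n' + 2 + t)).1 < x.1 :=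
      src_lt hR (concat_mem hp (by omega)) hx hA
    have hs2 : x.1 < (p (n' + 3 + t)).1 :=
      src_lt hR hx (concat_mem hp (by omega)) hub
    obtain ⟨hps1, hps2, hpsmin⟩ := concat_step hp (show n' + 1 + t + 2 < K by omega)
    simp only [show n' + 1 + t + 2 = n' + 3 + t from by omega,
        show n' + 1 + t + 1 = n' + 2 + t from by omega] at hps1 hps2 hpsmin
    by_cases hB : (p (n' + 1 + t)).2 ≤ x.1
    · exact absurd (hpsmin x hx hB (by omega)) (by omega)
    · omega

/-- The op-chain starting at the last relation of `p` moves left by less than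
one relation of `p` per step. -/
lemma opJ (hR : RelSet R) {K m' n' : ℕ} {p q : ℕ → Iv}
    (hp : IsConcat R K p) (hq : IsOpConcat R (m' + 1) q)
    (hK : K = n' + m' + 3) (h0 : q 0 = p (n' + m' + 2)) :
    ∀ j t, j + t = m' → (q j).1 < (p (n' + 1 + t)).2 := by
  intro j
  induction j using Nat.strong_induction_on with
  | _ j IH =>
  intro t ht
  rcases j with _ | j'
  · have h2 := (concat_step hp (show n' + m' + 2 < K by omega)).2.1
    rw [h0, show n' + 1 + t = n' + m' + 1 from by omega]
    exact h2
  · show (q (j' + 1)).1 < (p (n' + 1 + t)).2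
    have hxR : q (j' + 1) ∈ R := opconcat_mem hq (by omega)
    have hub : (q (j' + 1)).2 < (p (n' + 3 + t)).2 := by
      rcases j' with _ | j''
      · show (q 1).2 < (p (n' + 3 + t)).2
        have b := opconcat_one hq (by omega)
        rw [show n' + 3 + t = n' + m' + 2 from by omega, ← h0]
        exact b.2.1
      · show (q (j'' + 2)).2 < (p (n' + 3 + t)).2
        have b := opconcat_step hq (show j'' + 2 < m' + 1 by omega)
        have hI := IH j'' (by omega) (t + 2) (by omega)
        rw [show n' + 1 + (t + 2) = n' + 3 + t from by omega] at hI
        have hb := b.2.1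
        omega
    exact opJ_step hR hp n' t (by omega) _ hxR hub

end Stmt17Aux

/-- **Remark (f par) / Statement 17.** If `n` is even and `w ∈ AP_{n+m}`
factors as `w = w' u w''` (`w' ∈ AP_n`, `w'' ∈ AP_m^{op}`), then the only
`ψ ∈ AP_n` with `L(ψ) ψ R(ψ) = w' u` is `ψ = w'` itself (with `R(ψ) = u`);
consequently the lifting map satisfies
`f_n(1 ⊗ w ⊗ 1) = 1 ⊗ w' ⊗ u·f̂(w'')`.  (Interval model: `w` runs from
`(p 0).1` to `(p (n+m-2)).2`, `w' = [(p 0).1, c.1]`, `u = [c.1, c.2]`,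
`w'' = [c.2, (p (n+m-2)).2]`.) -/
theorem statement17 (R : Set Iv) (hR : RelSet R) (n m : ℕ) (hn : 2 ≤ n)
    (heven : Even n) (hm : 1 ≤ m)
    (p : ℕ → Iv) (hp : IsConcat R (n + m - 1) p) (c : Iv)
    (hc0 : (p 0).1 ≤ c.1) (hc : c.1 ≤ c.2) (hc2 : c.2 ≤ (p (n + m - 2)).2)
    (hw' : IsSupport R n ((p 0).1, c.1))
    (hw'' : IsOpSupport R m (c.2, (p (n + m - 2)).2)) :
    ∀ v : Iv, IsSupport R n v → (p 0).1 ≤ v.1 → v.2 ≤ c.2 →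
      v = ((p 0).1, c.1) := by
  intro v hv hv1 hv2
  obtain ⟨n', rfl⟩ : ∃ n', n = n' + 2 := ⟨n - 2, by omega⟩
  have hn' : Even n' := by
    rcases heven with ⟨r, hr⟩; exact ⟨r - 1, by omega⟩
  obtain ⟨q, hq, hq0, hqn⟩ := hv
  obtain ⟨p', hp', hp'0, hp'n⟩ := hw'
  have hp'0' : (p' 0).1 = (p 0).1 := hp'0
  have hp'n' : (p' n').2 = c.1 := hp'n
  -- `c.1` is the end of the `n`-concatenation starting `p`
  have hup := concat_unique hR hp hp' (by omega) hp'0'.symm n' (by omega)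
  -- Key bound: `c.2 < (p (n'+1)).2`
  have hL2 : c.2 < (p (n' + 1)).2 := by
    rcases eq_or_lt_of_le hm with h1 | h1
    · -- m = 1
      subst h1
      have h' : (p (n' + 1)).2 = c.2 + 1 := hw''
      omega
    · obtain ⟨m', rfl⟩ : ∃ m', m = m' + 2 := ⟨m - 2, by omega⟩
      rw [show n' + 2 + (m' + 2) - 2 = n' + m' + 2 from by omega] at hw''
      obtain ⟨q'', hq'', hm'', h0''⟩ := hw''
      have hm''' : (q'' m').1 = c.2 := hm''
      have h0''' : (q'' 0).2 = (p (n' + m' + 2)).2 := h0''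
      have he0 : q'' 0 = p (n' + m' + 2) :=
        tgt_eq hR (opconcat_mem hq'' (by omega)) (concat_mem hp (by omega)) h0'''
      have hJ : (q'' m').1 < (p (n' + 1 + 0)).2 :=
        opJ hR hp hq'' (by omega) he0 m' 0 (by omega)
      rw [show n' + 1 + 0 = n' + 1 from by omega] at hJ
      omega
  by_cases hq0p : q 0 = p 0
  · -- the support must start at the start of `p`, hence equal `w'`
    have hun := concat_unique hR hp hq (by omega)
      (show (p 0).1 = (q 0).1 from by rw [hq0p]) n' (by omega)
    have e1 : (q 0).1 = (p 0).1 := by rw [hq0p]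
    have e2 : (p n').2 = (q n').2 := congrArg Prod.snd hun
    have e3 : (p n').2 = (p' n').2 := congrArg Prod.snd hup
    rw [Prod.ext_iff]
    constructor
    · show v.1 = (p 0).1
      omega
    · show v.2 = c.1
      omega
  · exfalso
    have h0lt : (p 0).1 < (q 0).1 := by
      have hle : (p 0).1 ≤ (q 0).1 := by rw [hq0]; exact hv1
      rcases hle.lt_or_eq with h | h
      · exact h
      · exact absurd (src_eq hR hq.1 hp.1 h.symm) hq0p
    have hbase : (p 1).1 ≤ (q 0).1 := by
      by_contra hcon
      push_neg at hcon
      have a := concat_one hp (by omega)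
      exact absurd (a.2.2 (q 0) hq.1 h0lt (by omega)) (by omega)
    obtain ⟨r, hr⟩ := hn'
    have hS := shiftLem hR hp hq (by omega) hbase r (by omega)
    rw [show 2 * r = n' from by omega] at hS
    have hS2 : (p (n' + 1)).2 ≤ (q n').2 :=
      (src_le_iff hR (concat_mem hp (by omega)) (concat_mem hq (by omega))).1 hS
    omega


end Paper
end
end
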